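/- arXiv:2011.01133 — 4 statements merged into one kernel-verified Lean document; each statement's English description precedes it below -/
import Mathlib

section
/- Let x be a two-dimensional observable on the k-perfect MV-algebra M = Γ(ℤ ⋉ G,(k,0)) and let F = F_x. If (s_1,t_1) and (s_2,t_2) belong to T_i for some i ≥ 1 and (s_1,t_1) is not equivalent to (s_2,t_2) (i.e., π_i(s_1,t_1) ≠ π_i(s_2,t_2)), then s_1 ≠ s_2, t_1 ≠ t_2, and s_1 < s_2 if and only if t_1 > t_2. -/
open Function Set

/-- A partially ordered set is Dedekind σ-complete if every monotone increasing
sequence bounded above has a supremum. -/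
def DedekindSigmaComplete (G : Type*) [Preorder G] : Prop :=
  ∀ f : ℕ → G, Monotone f → BddAbove (Set.range f) → ∃ g, IsLUB (Set.range f) g

section Lexi

variable {H : Type*} [AddCommGroup H] [LinearOrder H] [IsOrderedAddMonoid H]
variable {G : Type*} [AddCommGroup G] [Lattice G] [CovariantClass G G (· + ·) (· ≤ ·)]

/-- `u` is a strong unit of `H`. -/
def IsStrongUnit (u : H) : Prop := ∀ h : H, ∃ n : ℕ, 0 < n ∧ h ≤ n • u

/-- The underlying set of the lexicographic MV-algebra `Γ(H ⋉ G, (u,0))`. -/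
def MSet (u : H) : Set (H ×ₗ G) := Set.Icc (toLex ((0 : H), (0 : G))) (toLex (u, (0 : G)))

/-- `M_h`: the elements of `M` whose first coordinate is `h`. -/
def MLevel (u h : H) : Set (H ×ₗ G) := {z ∈ MSet (G := G) u | (ofLex z).1 = h}

/-- A sequence of elements of `M` is summable if all its finite partial sums lie in `M`. -/
def SummableSeq (u : H) (a : ℕ → H ×ₗ G) : Prop := ∀ F : Finset ℕ, ∑ m ∈ F, a m ∈ MSet u

/-- `x` is an `n`-dimensional observable on `Γ(H ⋉ G, (u,0))`. -/
def IsObservable (u : H) (n : ℕ) (x : Set (Fin n → ℝ) → H ×ₗ G) : Prop :=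
  (∀ A : Set (Fin n → ℝ), MeasurableSet A → x A ∈ MSet u) ∧
  x Set.univ = toLex (u, (0 : G)) ∧
  ∀ A : ℕ → Set (Fin n → ℝ), (∀ m, MeasurableSet (A m)) → Pairwise (Disjoint on A) →
    (∀ F : Finset ℕ, ∑ m ∈ F, x (A m) ∈ MSet u) ∧
    IsLUB {y | ∃ F : Finset ℕ, y = ∑ m ∈ F, x (A m)} (x (⋃ m, A m))

/-- The spectral resolution `F_x` of an observable `x`. -/
def specRes {n : ℕ} (x : Set (Fin n → ℝ) → H ×ₗ G) : (Fin n → ℝ) → H ×ₗ G :=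
  fun t => x {s | ∀ i, s i < t i}

/-- The increment `V(F,[a,b))`. -/
def boxSum {n : ℕ} (F : (Fin n → ℝ) → H ×ₗ G) (a b : Fin n → ℝ) : H ×ₗ G :=
  ∑ S : Finset (Fin n), ((-1 : ℤ) ^ (n - S.card)) • F (fun i => if i ∈ S then b i else a i)

/-- `F` is an `n`-dimensional spectral resolution on `Γ(H ⋉ G, (u,0))`. -/
def IsSpectralResolution (u : H) (n : ℕ) (F : (Fin n → ℝ) → H ×ₗ G) : Prop :=
  Monotone F ∧
  IsLUB (Set.range F) (toLex (u, (0 : G))) ∧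
  (∀ t : Fin n → ℝ, IsLUB {y | ∃ s : Fin n → ℝ, (∀ i, s i < t i) ∧ y = F s} (F t)) ∧
  (∀ (i : Fin n) (s : Fin n → ℝ),
      IsGLB {y | ∃ r : ℝ, y = F (Function.update s i r)} (toLex ((0 : H), (0 : G)))) ∧
  (∀ a b : Fin n → ℝ, a ≤ b →
      toLex ((0 : H), (0 : G)) ≤ boxSum F a b ∧ boxSum F a b ≤ toLex (u, (0 : G)))

/-- `T_h = {s ∈ ℝⁿ : F s ∈ M_h}`. -/
def TSet (u : H) {n : ℕ} (F : (Fin n → ℝ) → H ×ₗ G) (h : H) : Set (Fin n → ℝ) :=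
  {s | F s ∈ MLevel u h}

/-- The projection `π_j^h(s)`. -/
noncomputable def proj (u : H) {n : ℕ} (F : (Fin n → ℝ) → H ×ₗ G) (h : H)
    (s : Fin n → ℝ) (j : Fin n) : ℝ :=
  sInf {r : ℝ | Function.update s j r ∈ TSet u F h}

/-- The characteristic point `π_h(s)` associated to `s ∈ T_h`. -/
noncomputable def charPt (u : H) {n : ℕ} (F : (Fin n → ℝ) → H ×ₗ G) (h : H)
    (s : Fin n → ℝ) : Fin n → ℝ :=
  fun j => proj u F h s j

/-- The set of characteristic points of `T_h`. -/
def charPts (u : H) {n : ℕ} (F : (Fin n → ℝ) → H ×ₗ G) (h : H) : Set (Fin n → ℝ) :=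
  charPt u F h '' TSet u F h

/-- The set of all characteristic points of `F`. -/
def charPoints (u : H) {n : ℕ} (F : (Fin n → ℝ) → H ×ₗ G) : Set (Fin n → ℝ) :=
  {p | ∃ h : H, 0 < h ∧ h ≤ u ∧ p ∈ charPts u F h}

/-- A block of some `T_h`, `0 < h ≤ u`. -/
def IsBlock (u : H) {n : ℕ} (F : (Fin n → ℝ) → H ×ₗ G) (C : Set (Fin n → ℝ)) : Prop :=
  ∃ h : H, 0 < h ∧ h ≤ u ∧ ∃ s ∈ TSet u F h,
    C = {t ∈ TSet u F h | charPt u F h t = charPt u F h s}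

/-- A `T_0`-adjoined block. -/
def IsT0AdjBlock (u : H) {n : ℕ} (F : (Fin n → ℝ) → H ×ₗ G) (C : Set (Fin n → ℝ)) : Prop :=
  ∃ h : H, 0 < h ∧ h ≤ u ∧ (∃ s ∈ TSet u F h,
    C = {t ∈ TSet u F h | charPt u F h t = charPt u F h s}) ∧
    ∀ t ∈ C, ∀ j : Fin n, Function.update t j (proj u F h t j) ∈ TSet u F 0

end Lexi

section Aux
set_option linter.unusedSectionVars false

/-- The lower-left quadrant `(-∞,c) × (-∞,d)`. -/
def Rset (c d : ℝ) : Set (Fin 2 → ℝ) := (fun p : Fin 2 → ℝ => p 0) ⁻¹' Set.Iio c ∩ (fun p : Fin 2 → ℝ => p 1) ⁻¹' Set.Iio d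

/-- The vertical strip `[a,b) × (-∞,d)`. -/
def Strip (a b d : ℝ) : Set (Fin 2 → ℝ) := (fun p : Fin 2 → ℝ => p 0) ⁻¹' Set.Ico a b ∩ (fun p : Fin 2 → ℝ => p 1) ⁻¹' Set.Iio d

/-- The half-open box `[a1,b1) × [a2,b2)`. -/
def BoxSet (a1 b1 a2 b2 : ℝ) : Set (Fin 2 → ℝ) := (fun p : Fin 2 → ℝ => p 0) ⁻¹' Set.Ico a1 b1 ∩ (fun p : Fin 2 → ℝ => p 1) ⁻¹' Set.Ico a2 b2

lemma measRset (c d : ℝ) : MeasurableSet (Rset c d) :=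
  (((measurable_pi_apply 0) measurableSet_Iio).inter ((measurable_pi_apply 1) measurableSet_Iio))

lemma measStrip (a b d : ℝ) : MeasurableSet (Strip a b d) :=
  (((measurable_pi_apply 0) measurableSet_Ico).inter ((measurable_pi_apply 1) measurableSet_Iio))

lemma measBoxSet (a1 b1 a2 b2 : ℝ) : MeasurableSet (BoxSet a1 b1 a2 b2) :=
  (((measurable_pi_apply 0) measurableSet_Ico).inter ((measurable_pi_apply 1) measurableSet_Ico))

lemma Rset_union (a b d : ℝ) (hab : a ≤ b) : Rset b d = Rset a d ∪ Strip a b d := by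
  ext p
  simp only [Rset, Strip, Set.mem_inter_iff, Set.mem_preimage, Set.mem_Iio, Set.mem_Ico,
    Set.mem_union]
  constructor
  · rintro ⟨h1, h2⟩
    rcases lt_or_ge (p 0) a with h | h
    · exact Or.inl ⟨h, h2⟩
    · exact Or.inr ⟨⟨h, h1⟩, h2⟩
  · rintro (⟨h1, h2⟩ | ⟨⟨h1, h2⟩, h3⟩)
    · exact ⟨h1.trans_le hab, h2⟩
    · exact ⟨h2, h3⟩

lemma Rset_disj (a b d : ℝ) : Disjoint (Rset a d) (Strip a b d) := by
  rw [Set.disjoint_left]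
  rintro p ⟨h1, _⟩ ⟨⟨h3, _⟩, _⟩
  exact absurd h1 (not_lt.mpr h3)

lemma Strip_union (a b d1 d2 : ℝ) (hd : d1 ≤ d2) :
    Strip a b d2 = Strip a b d1 ∪ BoxSet a b d1 d2 := by
  ext p
  simp only [Strip, BoxSet, Set.mem_inter_iff, Set.mem_preimage, Set.mem_Iio, Set.mem_Ico,
    Set.mem_union]
  constructor
  · rintro ⟨h1, h2⟩
    rcases lt_or_ge (p 1) d1 with h | h
    · exact Or.inl ⟨h1, h⟩
    · exact Or.inr ⟨h1, h, h2⟩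
  · rintro (⟨h1, h2⟩ | ⟨h1, h2, h3⟩)
    · exact ⟨h1, h2.trans_le hd⟩
    · exact ⟨h1, h3⟩

lemma Strip_disj (a b d1 d2 : ℝ) : Disjoint (Strip a b d1) (BoxSet a b d1 d2) := by
  rw [Set.disjoint_left]
  rintro p ⟨_, h2⟩ ⟨_, h3, _⟩
  exact absurd h2 (not_lt.mpr h3)

lemma Rset_subset {c d c' d' : ℝ} (hc : c ≤ c') (hd : d ≤ d') : Rset c d ⊆ Rset c' d' := by
  rintro p ⟨h1, h2⟩
  exact ⟨lt_of_lt_of_le h1 hc, lt_of_lt_of_le h2 hd⟩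

variable {G : Type*} [AddCommGroup G] [Lattice G] [CovariantClass G G (· + ·) (· ≤ ·)]

lemma lexle (a b : ℤ ×ₗ G) : a ≤ b ↔
    (ofLex a).1 < (ofLex b).1 ∨ ((ofLex a).1 = (ofLex b).1 ∧ (ofLex a).2 ≤ (ofLex b).2) :=
  Prod.Lex.le_iff

noncomputable instance : IsOrderedAddMonoid (ℤ ×ₗ G) :=
  { add_le_add_left := by
      intro a b h c
      rw [lexle] at h ⊢
      rcases h with h | ⟨h1, h2⟩
      · left; show (ofLex a).1 + (ofLex c).1 < (ofLex b).1 + (ofLex c).1; omega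
      · right
        exact ⟨show (ofLex a).1 + (ofLex c).1 = (ofLex b).1 + (ofLex c).1 by rw [h1],
          show (ofLex a).2 + (ofLex c).2 ≤ (ofLex b).2 + (ofLex c).2 from add_le_add h2 le_rfl⟩ }

lemma lex_fst_mono {a b : ℤ ×ₗ G} (h : a ≤ b) : (ofLex a).1 ≤ (ofLex b).1 := by
  rcases (lexle a b).mp h with h | ⟨h, _⟩ <;> [exact h.le; exact h.le]

/-- The first (integer) coordinate of the spectral data of `x` on quadrants. -/
def ff (x : Set (Fin 2 → ℝ) → ℤ ×ₗ G) (c d : ℝ) : ℤ := (ofLex (x (Rset c d))).1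

variable {u : ℤ} {x : Set (Fin 2 → ℝ) → ℤ ×ₗ G} (hx : IsObservable u 2 x)
include hx

lemma obs_nonneg {A : Set (Fin 2 → ℝ)} (hA : MeasurableSet A) : 0 ≤ x A :=
  (hx.1 A hA).1

lemma obs_empty : x ∅ = 0 := by
  have h := (hx.2.2 (fun _ => ∅) (fun _ => MeasurableSet.empty)
    (by intro i j hij; simp [Function.onFun])).2
  rw [Set.iUnion_empty] at h
  have hmem : x ∅ + x ∅ ∈ {y | ∃ F : Finset ℕ, y = ∑ _m ∈ F, x ∅} :=
    ⟨{0, 1}, by rw [Finset.sum_pair (by norm_num : (0 : ℕ) ≠ 1)]⟩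
  have h1 : x ∅ + x ∅ ≤ x ∅ := h.1 hmem
  have h2 : (0 : ℤ ×ₗ G) ≤ x ∅ := obs_nonneg hx MeasurableSet.empty
  have h3 : x ∅ ≤ 0 := by
    have := add_le_add_right h1 (-(x ∅))
    simpa using this
  exact le_antisymm h3 h2

lemma obs_add {U V : Set (Fin 2 → ℝ)} (hU : MeasurableSet U) (hV : MeasurableSet V)
    (hd : Disjoint U V) : x (U ∪ V) = x U + x V := by
  set A : ℕ → Set (Fin 2 → ℝ) := fun m => if m = 0 then U else if m = 1 then V else ∅ with hA
  have hmeas : ∀ m, MeasurableSet (A m) := by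
    intro m; simp only [hA]
    split_ifs <;> first | exact hU | exact hV | exact MeasurableSet.empty
  have hpd : Pairwise (Disjoint on A) := by
    intro m m' hmm'
    simp only [Function.onFun, hA]
    split_ifs <;>
      first
        | exact hd
        | exact hd.symm
        | exact Set.disjoint_empty _
        | exact Set.empty_disjoint _
        | omega
  have hA0 : A 0 = U := by simp [hA]
  have hA1 : A 1 = V := by simp [hA]
  have hAz : ∀ m, m ≠ 0 → m ≠ 1 → x (A m) = 0 := by
    intro m hm0 hm1; simp only [hA, if_neg hm0, if_neg hm1]; exact obs_empty hx
  have hsum01 : ∑ m ∈ ({0, 1} : Finset ℕ), x (A m) = x U + x V := by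
    rw [Finset.sum_pair (by norm_num : (0 : ℕ) ≠ 1), hA0, hA1]
  have hub : ∀ F : Finset ℕ, ∑ m ∈ F, x (A m) ≤ x U + x V := by
    intro F
    have h1 : ∑ m ∈ F, x (A m) = ∑ m ∈ F ∩ {0, 1}, x (A m) := by
      refine (Finset.sum_subset Finset.inter_subset_left ?_).symm
      intro m hm hnm
      have hm01 : m ∈ ({0, 1} : Finset ℕ) → False := fun h =>
        hnm (Finset.mem_inter.mpr ⟨hm, h⟩)
      refine hAz m ?_ ?_ <;> (intro h; exact hm01 (by simp [h]))
    rw [h1, ← hsum01]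
    refine Finset.sum_le_sum_of_subset_of_nonneg Finset.inter_subset_right ?_
    intro m _ _
    exact obs_nonneg hx (hmeas m)
  have hUnion : ⋃ m, A m = U ∪ V := by
    apply subset_antisymm
    · refine Set.iUnion_subset fun m => ?_
      simp only [hA]
      split_ifs <;>
        first
          | exact Set.subset_union_left
          | exact Set.subset_union_right
          | exact Set.empty_subset _
    · refine Set.union_subset ?_ ?_
      · rw [← hA0]; exact Set.subset_iUnion A 0
      · rw [← hA1]; exact Set.subset_iUnion A 1
  have h := (hx.2.2 A hmeas hpd).2
  rw [hUnion] at h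
  refine le_antisymm (h.2 fun y hy => ?_) (h.1 ⟨{0, 1}, hsum01.symm⟩)
  obtain ⟨F, rfl⟩ := hy
  exact hub F

lemma obs_mono {U V : Set (Fin 2 → ℝ)} (hU : MeasurableSet U) (hV : MeasurableSet V)
    (hUV : U ⊆ V) : x U ≤ x V := by
  have h := obs_add hx hU (hV.diff hU) Set.disjoint_sdiff_right
  rw [Set.union_diff_cancel hUV] at h
  rw [h]
  exact le_add_of_nonneg_right (obs_nonneg hx (hV.diff hU))

lemma ff_mono {c d c' d' : ℝ} (hc : c ≤ c') (hd : d ≤ d') : ff x c d ≤ ff x c' d' :=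
  lex_fst_mono (obs_mono hx (measRset c d) (measRset c' d') (Rset_subset hc hd))

lemma ff_box {a1 b1 a2 b2 : ℝ} (h1 : a1 ≤ b1) (h2 : a2 ≤ b2) :
    ff x a1 b2 + ff x b1 a2 ≤ ff x b1 b2 + ff x a1 a2 := by
  have e1 : x (Rset b1 b2) = x (Rset a1 b2) + x (Strip a1 b1 b2) := by
    rw [Rset_union a1 b1 b2 h1]
    exact obs_add hx (measRset _ _) (measStrip _ _ _) (Rset_disj _ _ _)
  have e2 : x (Rset b1 a2) = x (Rset a1 a2) + x (Strip a1 b1 a2) := by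
    rw [Rset_union a1 b1 a2 h1]
    exact obs_add hx (measRset _ _) (measStrip _ _ _) (Rset_disj _ _ _)
  have e3 : x (Strip a1 b1 b2) = x (Strip a1 b1 a2) + x (BoxSet a1 b1 a2 b2) := by
    rw [Strip_union a1 b1 a2 b2 h2]
    exact obs_add hx (measStrip _ _ _) (measBoxSet _ _ _ _) (Strip_disj _ _ _ _)
  have g1 : ff x b1 b2 = ff x a1 b2 + (ofLex (x (Strip a1 b1 b2))).1 :=
    congrArg (fun z => (ofLex z).1) e1
  have g2 : ff x b1 a2 = ff x a1 a2 + (ofLex (x (Strip a1 b1 a2))).1 :=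
    congrArg (fun z => (ofLex z).1) e2
  have g3 : (ofLex (x (Strip a1 b1 b2))).1 =
      (ofLex (x (Strip a1 b1 a2))).1 + (ofLex (x (BoxSet a1 b1 a2 b2))).1 :=
    congrArg (fun z => (ofLex z).1) e3
  have hb : (0 : ℤ) ≤ (ofLex (x (BoxSet a1 b1 a2 b2))).1 :=
    lex_fst_mono (obs_nonneg hx (measBoxSet a1 b1 a2 b2))
  omega

omit hx in
lemma specRes_eq (c d : ℝ) : specRes x ![c, d] = x (Rset c d) := by
  unfold specRes
  congr 1
  ext p
  rw [Set.mem_setOf_eq, Fin.forall_fin_two]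
  simp [Rset]

lemma mem_TSet_iff (c d : ℝ) (i : ℤ) :
    ![c, d] ∈ TSet u (specRes x) i ↔ ff x c d = i := by
  simp only [TSet, MLevel, Set.mem_setOf_eq, Set.mem_sep_iff, specRes_eq (x := x) c d]
  exact ⟨fun h => h.2, fun h => ⟨hx.1 _ (measRset c d), h⟩⟩

end Aux

section Main
set_option linter.unusedSectionVars false

lemma update_vec0 (a b r : ℝ) : Function.update ![a, b] 0 r = ![r, b] := by
  funext j; fin_cases j <;> simp [Function.update]

lemma update_vec1 (a b r : ℝ) : Function.update ![a, b] 1 r = ![a, r] := by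
  funext j; fin_cases j <;> simp [Function.update]

lemma sInf_congr_of_agree {S S' : Set ℝ} {c : ℝ} (hc : c ∈ S) (hc' : c ∈ S')
    (h : ∀ r ≤ c, (r ∈ S ↔ r ∈ S')) : sInf S = sInf S' := by
  have bb : ∀ T T' : Set ℝ, c ∈ T → c ∈ T' → (∀ r ≤ c, r ∈ T → r ∈ T') →
      BddBelow T' → BddBelow T := by
    rintro T T' hcT hcT' himp ⟨b, hb⟩
    refine ⟨min b c, fun r hr => ?_⟩
    rcases le_or_gt r c with h' | h'
    · exact le_trans (min_le_left _ _) (hb (himp r h' hr))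
    · exact le_trans (min_le_right _ _) h'.le
  have hle : ∀ T T' : Set ℝ, c ∈ T → c ∈ T' → (∀ r ≤ c, r ∈ T' → r ∈ T) →
      BddBelow T → BddBelow T' → sInf T ≤ sInf T' := by
    intro T T' hcT hcT' himp hT hT'
    refine le_csInf ⟨c, hcT'⟩ fun r hr => ?_
    rcases le_or_gt r c with h' | h'
    · exact csInf_le hT (himp r h' hr)
    · exact (csInf_le hT hcT).trans h'.le
  by_cases hS : BddBelow S
  · have hS' : BddBelow S' := bb S' S hc' hc (fun r hr hr' => (h r hr).mpr hr') hS
    exact le_antisymm (hle S S' hc hc' (fun r hr => (h r hr).mpr) hS hS')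
      (hle S' S hc' hc (fun r hr => (h r hr).mp) hS' hS)
  · have hS' : ¬BddBelow S' := fun hb =>
      hS (bb S S' hc hc' (fun r hr => (h r hr).mp) hb)
    rw [Real.sInf_of_not_bddBelow hS, Real.sInf_of_not_bddBelow hS']

variable {G : Type*} [AddCommGroup G] [Lattice G] [CovariantClass G G (· + ·) (· ≤ ·)]
variable {u : ℤ} {x : Set (Fin 2 → ℝ) → ℤ ×ₗ G} (hx : IsObservable u 2 x)
include hx

lemma proj_zero_eq (c d : ℝ) (i : ℤ) :
    proj u (specRes x) i ![c, d] 0 = sInf {r : ℝ | ff x r d = i} := by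
  unfold proj
  congr 1
  ext r
  rw [Set.mem_setOf_eq, Set.mem_setOf_eq, update_vec0, mem_TSet_iff hx]

lemma proj_one_eq (c d : ℝ) (i : ℤ) :
    proj u (specRes x) i ![c, d] 1 = sInf {r : ℝ | ff x c r = i} := by
  unfold proj
  congr 1
  ext r
  rw [Set.mem_setOf_eq, Set.mem_setOf_eq, update_vec1, mem_TSet_iff hx]

lemma key_comparable (i : ℤ) {a1 a2 b1 b2 : ℝ} (h1 : a1 ≤ b1) (h2 : a2 ≤ b2)
    (ha : ![a1, a2] ∈ TSet u (specRes x) i) (hb : ![b1, b2] ∈ TSet u (specRes x) i) :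
    charPt u (specRes x) i ![a1, a2] = charPt u (specRes x) i ![b1, b2] := by
  rw [mem_TSet_iff hx] at ha hb
  have hba : ff x b1 a2 = i :=
    le_antisymm (hb ▸ ff_mono hx le_rfl h2) (ha ▸ ff_mono hx h1 le_rfl)
  have hab : ff x a1 b2 = i :=
    le_antisymm (hb ▸ ff_mono hx h1 le_rfl) (ha ▸ ff_mono hx le_rfl h2)
  have hrow : ∀ d ≤ b2, ff x a1 d = ff x b1 d := by
    intro d hd
    refine le_antisymm (ff_mono hx h1 le_rfl) ?_
    have := ff_box hx h1 hd
    omega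
  have hcol : ∀ r ≤ b1, ff x r a2 = ff x r b2 := by
    intro r hr
    refine le_antisymm (ff_mono hx le_rfl h2) ?_
    have := ff_box hx hr h2
    omega
  funext j
  fin_cases j
  · show proj u (specRes x) i ![a1, a2] 0 = proj u (specRes x) i ![b1, b2] 0
    rw [proj_zero_eq hx, proj_zero_eq hx]
    exact sInf_congr_of_agree (c := b1) hba hb fun r hr => by
      simp only [Set.mem_setOf_eq, hcol r hr]
  · show proj u (specRes x) i ![a1, a2] 1 = proj u (specRes x) i ![b1, b2] 1
    rw [proj_one_eq hx, proj_one_eq hx]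
    exact sInf_congr_of_agree (c := b2) hab hb fun r hr => by
      simp only [Set.mem_setOf_eq, hrow r hr]

end Main

theorem stmt_12 {G : Type*}
    [AddCommGroup G] [Lattice G] [CovariantClass G G (· + ·) (· ≤ ·)]
    (hG : DedekindSigmaComplete G) (k : ℕ) (hk : 1 ≤ k)
    (x : Set (Fin 2 → ℝ) → ℤ ×ₗ G) (hx : IsObservable (k : ℤ) 2 x)
    (i : ℤ) (hi1 : 1 ≤ i) (hik : i ≤ (k : ℤ))
    (s1 t1 s2 t2 : ℝ)
    (h1 : ![s1, t1] ∈ TSet (k : ℤ) (specRes x) i)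
    (h2 : ![s2, t2] ∈ TSet (k : ℤ) (specRes x) i)
    (hne : charPt (k : ℤ) (specRes x) i ![s1, t1] ≠ charPt (k : ℤ) (specRes x) i ![s2, t2]) :
    s1 ≠ s2 ∧ t1 ≠ t2 ∧ (s1 < s2 ↔ t2 < t1) := by
  have h12 : ¬(s1 ≤ s2 ∧ t1 ≤ t2) := fun ⟨h, h'⟩ =>
    hne (key_comparable hx i h h' h1 h2)
  have h21 : ¬(s2 ≤ s1 ∧ t2 ≤ t1) := fun ⟨h, h'⟩ =>
    hne (key_comparable hx i h h' h2 h1).symm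
  have hs : s1 ≠ s2 := by
    rintro rfl
    rcases le_total t1 t2 with h | h
    · exact h12 ⟨le_rfl, h⟩
    · exact h21 ⟨le_rfl, h⟩
  have ht : t1 ≠ t2 := by
    rintro rfl
    rcases le_total s1 s2 with h | h
    · exact h12 ⟨h, le_rfl⟩
    · exact h21 ⟨h, le_rfl⟩
  refine ⟨hs, ht, ?_, ?_⟩
  · intro hlt
    rcases lt_or_ge t2 t1 with h | h
    · exact h
    · exact absurd ⟨hlt.le, h⟩ h12
  · intro hlt
    rcases lt_or_ge s1 s2 with h | h
    · exact h
    · exact absurd ⟨h, hlt.le⟩ h21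
end

section
/- Let F be a two-dimensional spectral resolution on the k-perfect MV-algebra M = Γ(ℤ ⋉ G,(k,0)) and let (s_0,t_0) be a characteristic point of F. If t > t_0, s_1 ≤ s_0 < s_2, F(s_1,t) ∈ M_m and F(s_2,t) ∈ M_j, then m < j. (Analogously, if s > s_0, t_1 ≤ t_0 < t_2, F(s,t_1) ∈ M_m and F(s,t_2) ∈ M_j, then m < j.) -/
open Function Set

section Aux13
set_option linter.unusedSectionVars false

variable {G : Type*} [AddCommGroup G] [Lattice G] [CovariantClass G G (· + ·) (· ≤ ·)]

/-- The first coordinate of `ℤ ×ₗ G`, as an additive monoid hom. -/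
private def fstHom13 : (ℤ ×ₗ G) →+ ℤ where
  toFun z := (ofLex z).1
  map_zero' := rfl
  map_add' _ _ := rfl

private lemma le_iff13 (x y : ℤ ×ₗ G) :
    x ≤ y ↔ (ofLex x).1 < (ofLex y).1 ∨ ((ofLex x).1 = (ofLex y).1 ∧ (ofLex x).2 ≤ (ofLex y).2) :=
  Prod.Lex.le_iff (x := x) (y := y)

private lemma fstHom13_mono : Monotone (fstHom13 (G := G)) := by
  intro x y hxy
  rcases (le_iff13 x y).mp hxy with h | h
  · exact h.le
  · exact h.1.le

private lemma sum_finset_fin_two {A : Type*} [AddCommGroup A] (f : Finset (Fin 2) → A) :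
    ∑ S : Finset (Fin 2), f S = f ∅ + f {0} + f {1} + f Finset.univ := by
  have h : (Finset.univ : Finset (Finset (Fin 2))) = {∅, {0}, {1}, Finset.univ} := by decide
  rw [h, Finset.sum_insert (by decide), Finset.sum_insert (by decide),
    Finset.sum_insert (by decide), Finset.sum_singleton]
  abel

variable {u : ℤ} {F : (Fin 2 → ℝ) → ℤ ×ₗ G}

private lemma monoF13 (hF : IsSpectralResolution u 2 F) {x1 x2 y1 y2 : ℝ}
    (hx : x1 ≤ x2) (hy : y1 ≤ y2) :
    fstHom13 (F ![x1, y1]) ≤ fstHom13 (F ![x2, y2]) := by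
  refine fstHom13_mono (hF.1 ?_)
  intro i
  fin_cases i <;> simpa

private lemma box13 (hF : IsSpectralResolution u 2 F) {x1 x2 y1 y2 : ℝ}
    (hx : x1 ≤ x2) (hy : y1 ≤ y2) :
    fstHom13 (F ![x1, y2]) + fstHom13 (F ![x2, y1]) ≤
      fstHom13 (F ![x1, y1]) + fstHom13 (F ![x2, y2]) := by
  have hab : (![x1, y1] : Fin 2 → ℝ) ≤ ![x2, y2] := by
    intro i; fin_cases i <;> simpa
  have h0 := (hF.2.2.2.2 ![x1, y1] ![x2, y2] hab).1
  have h1 : (0 : ℤ) ≤ fstHom13 (boxSum F ![x1, y1] ![x2, y2]) := fstHom13_mono h0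
  have e0 : (fun i : Fin 2 => if i ∈ (∅ : Finset (Fin 2)) then ![x2,y2] i else ![x1,y1] i)
      = ![x1, y1] := by funext i; fin_cases i <;> simp
  have e1 : (fun i : Fin 2 => if i ∈ ({0} : Finset (Fin 2)) then ![x2,y2] i else ![x1,y1] i)
      = ![x2, y1] := by funext i; fin_cases i <;> simp
  have e2 : (fun i : Fin 2 => if i ∈ ({1} : Finset (Fin 2)) then ![x2,y2] i else ![x1,y1] i)
      = ![x1, y2] := by funext i; fin_cases i <;> simp
  have e3 : (fun i : Fin 2 => if i ∈ (Finset.univ : Finset (Fin 2)) then ![x2,y2] i else ![x1,y1] i)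
      = ![x2, y2] := by funext i; fin_cases i <;> simp
  have e : fstHom13 (boxSum F ![x1, y1] ![x2, y2]) =
      fstHom13 (F ![x1, y1]) - fstHom13 (F ![x2, y1]) - fstHom13 (F ![x1, y2])
        + fstHom13 (F ![x2, y2]) := by
    rw [boxSum, map_sum, sum_finset_fin_two
      (fun S : Finset (Fin 2) => fstHom13 (((-1:ℤ) ^ (2 - S.card)) •
        F (fun i => if i ∈ S then ![x2,y2] i else ![x1,y1] i)))]
    rw [e0, e1, e2, e3]
    simp only [map_zsmul, Finset.card_empty, Finset.card_singleton, Finset.card_univ,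
      Fintype.card_fin]
    norm_num
    ring
  rw [e] at h1
  linarith

private lemma leftAttain13 (hF : IsSpectralResolution u 2 F) (t : Fin 2 → ℝ) :
    ∃ s : Fin 2 → ℝ, (∀ i, s i < t i) ∧ fstHom13 (F s) = fstHom13 (F t) := by
  have H := hF.2.2.1 t
  have hPbdd : ∃ b : ℤ, ∀ z : ℤ,
      (∃ s : Fin 2 → ℝ, (∀ i, s i < t i) ∧ fstHom13 (F s) = z) → z ≤ b := by
    refine ⟨fstHom13 (F t), ?_⟩
    rintro z ⟨s, hs, rfl⟩
    exact fstHom13_mono (H.1 ⟨s, hs, rfl⟩)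
  have hPinh : ∃ z : ℤ, ∃ s : Fin 2 → ℝ, (∀ i, s i < t i) ∧ fstHom13 (F s) = z :=
    ⟨_, fun i => t i - 1, fun i => by show t i - 1 < t i; linarith, rfl⟩
  obtain ⟨h', ⟨s', hs', hval⟩, hmax⟩ := Int.exists_greatest_of_bdd hPbdd hPinh
  have hle : h' ≤ fstHom13 (F t) := by
    have h1 := fstHom13_mono (H.1 (show F s' ∈ _ from ⟨s', hs', rfl⟩))
    omega
  rcases eq_or_lt_of_le hle with heq | hlt
  · exact ⟨s', hs', hval.trans heq⟩
  · exfalso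
    by_cases hbd : ∃ x : G, ∀ y ∈ {y | ∃ s : Fin 2 → ℝ, (∀ i, s i < t i) ∧ y = F s},
        y ≤ toLex (h', x)
    · obtain ⟨x, hx⟩ := hbd
      have h2 := fstHom13_mono (H.2 hx)
      have h3 : fstHom13 (F t) ≤ h' := h2
      omega
    · push_neg at hbd
      have hub : ∀ x : G, F t ≤ toLex (h' + 1, x) := by
        intro x
        refine H.2 ?_
        rintro y ⟨s, hs, rfl⟩
        refine (le_iff13 _ _).mpr (Or.inl ?_)
        have h4 : fstHom13 (F s) ≤ h' := hmax _ ⟨s, hs, rfl⟩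
        show fstHom13 (F s) < h' + 1
        omega
      have hfst : fstHom13 (F t) = h' + 1 := by
        have h1 : fstHom13 (F t) ≤ h' + 1 := fstHom13_mono (hub 0)
        omega
      have hsnd : ∀ x : G, (ofLex (F t)).2 ≤ x := by
        intro x
        rcases (le_iff13 _ _).mp (hub x) with hl | hl
        · exfalso
          have : fstHom13 (F t) < h' + 1 := hl
          omega
        · exact hl.2
      have h2 : (ofLex (F t)).2 = 0 := by
        have ha : (ofLex (F t)).2 ≤ 0 := hsnd 0
        have hb : (ofLex (F t)).2 ≤ (ofLex (F t)).2 + (ofLex (F t)).2 := hsnd _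
        exact le_antisymm ha (le_add_iff_nonneg_right _ |>.mp hb)
      have hzero : ∀ x : G, x = 0 := by
        intro x
        have hx1 : (0:G) ≤ x := h2 ▸ hsnd x
        have hx2 : (0:G) ≤ -x := h2 ▸ hsnd (-x)
        exact le_antisymm (neg_nonneg.mp hx2) hx1
      obtain ⟨y, hyS, hy⟩ := hbd 0
      obtain ⟨s, hs, rfl⟩ := hyS
      refine hy ((le_iff13 _ _).mpr ?_)
      have hle' : fstHom13 (F s) ≤ h' := hmax _ ⟨s, hs, rfl⟩
      rcases lt_or_eq_of_le hle' with h | h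
      · exact Or.inl h
      · exact Or.inr ⟨h, by rw [hzero (ofLex (F s)).2]; exact le_rfl⟩

private lemma slice13 (hF : IsSpectralResolution u 2 F) {h : ℤ} (hpos : 0 < h)
    (i : Fin 2) (s : Fin 2 → ℝ) :
    BddBelow {r : ℝ | fstHom13 (F (Function.update s i r)) = h} := by
  by_contra hbdd
  rw [not_bddBelow_iff] at hbdd
  have hall : ∀ r : ℝ, h ≤ fstHom13 (F (Function.update s i r)) := by
    intro r
    obtain ⟨r', hr', hlt⟩ := hbdd r
    have hmono : Function.update s i r' ≤ Function.update s i r := by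
      intro j
      rcases eq_or_ne j i with rfl | hne
      · simp [hlt.le]
      · simp [Function.update_of_ne hne]
    have := fstHom13_mono (hF.1 hmono)
    have hr'' : fstHom13 (F (Function.update s i r')) = h := hr'
    omega
  have HG := hF.2.2.2.1 i s
  have hGle : ∀ x : G, x ≤ 0 := by
    intro x
    have hlb : (toLex ((0:ℤ), x)) ∈ lowerBounds {y | ∃ r : ℝ, y = F (Function.update s i r)} := by
      rintro y ⟨r, rfl⟩
      exact (le_iff13 _ _).mpr (Or.inl (lt_of_lt_of_le hpos (hall r)))
    have h1 := HG.2 hlb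
    rcases (le_iff13 _ _).mp h1 with h2 | h2
    · exact absurd h2 (lt_irrefl 0)
    · exact h2.2
  have hGzero : ∀ x : G, x = 0 := by
    intro x
    have h1 : -x ≤ 0 := hGle (-x)
    exact le_antisymm (hGle x) (neg_nonpos.mp h1)
  have hlb1 : (toLex ((1:ℤ), (0:G))) ∈ lowerBounds
      {y | ∃ r : ℝ, y = F (Function.update s i r)} := by
    rintro y ⟨r, rfl⟩
    refine (le_iff13 _ _).mpr ?_
    have h1 : 1 ≤ fstHom13 (F (Function.update s i r)) := by have := hall r; omega
    rcases lt_or_eq_of_le h1 with h2 | h2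
    · exact Or.inl h2
    · exact Or.inr ⟨h2, by rw [hGzero (ofLex (F (Function.update s i r))).2]; exact le_rfl⟩
  have h1 := HG.2 hlb1
  rcases (le_iff13 _ _).mp h1 with h2 | h2
  · exact absurd h2 (by norm_num)
  · exact absurd h2.1 (by norm_num)

private lemma memT13 (hF : IsSpectralResolution u 2 F) {h : ℤ} (s : Fin 2 → ℝ) :
    s ∈ TSet u F h ↔ fstHom13 (F s) = h := by
  constructor
  · exact fun hs => hs.2
  · intro hs
    refine ⟨⟨?_, ?_⟩, hs⟩
    · exact (hF.2.2.2.1 0 s).1 ⟨s 0, by rw [Function.update_eq_self]⟩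
    · exact hF.2.1.1 ⟨s, rfl⟩

end Aux13


theorem stmt_13 {G : Type*}
    [AddCommGroup G] [Lattice G] [CovariantClass G G (· + ·) (· ≤ ·)]
    (hG : DedekindSigmaComplete G) (k : ℕ) (hk : 1 ≤ k)
    (F : (Fin 2 → ℝ) → ℤ ×ₗ G) (hF : IsSpectralResolution (k : ℤ) 2 F)
    (s0 t0 : ℝ) (hchar : ![s0, t0] ∈ charPoints (k : ℤ) F) :
    (∀ t s1 s2 : ℝ, ∀ m j : ℤ, t0 < t → s1 ≤ s0 → s0 < s2 →
      F ![s1, t] ∈ MLevel (k : ℤ) m → F ![s2, t] ∈ MLevel (k : ℤ) j → m < j) ∧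
    (∀ s t1 t2 : ℝ, ∀ m j : ℤ, s0 < s → t1 ≤ t0 → t0 < t2 →
      F ![s, t1] ∈ MLevel (k : ℤ) m → F ![s, t2] ∈ MLevel (k : ℤ) j → m < j) := by
  classical
  obtain ⟨h, hpos, hku, sh, hshT, hch⟩ :
      ∃ h : ℤ, 0 < h ∧ h ≤ (k : ℤ) ∧ ∃ sh ∈ TSet (k : ℤ) F h, charPt (k : ℤ) F h sh = ![s0, t0] := by
    obtain ⟨h, h1, h2, sh, h4, h5⟩ := hchar
    exact ⟨h, h1, h2, sh, h4, h5⟩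
  set a : ℝ := sh 0 with ha
  set b : ℝ := sh 1 with hb
  have hupd0 : ∀ r : ℝ, Function.update sh 0 r = ![r, b] := by
    intro r; funext j; fin_cases j
    · simp
    · rw [Function.update_of_ne (by decide)]; simp [hb]
  have hupd1 : ∀ r : ℝ, Function.update sh 1 r = ![a, r] := by
    intro r; funext j; fin_cases j
    · rw [Function.update_of_ne (by decide)]; simp [ha]
    · simp
  have hsheq : sh = ![a, b] := by
    funext j; fin_cases j <;> simp [ha, hb]
  have hab : fstHom13 (F ![a, b]) = h := by rw [← hsheq]; exact hshT.2
  set Sa : Set ℝ := {r : ℝ | fstHom13 (F ![r, b]) = h} with hSadef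
  set Sb : Set ℝ := {r : ℝ | fstHom13 (F ![a, r]) = h} with hSbdef
  have hs0 : s0 = sInf Sa := by
    have h1 := congrFun hch 0
    simp only [charPt, Matrix.cons_val_zero] at h1
    rw [← h1, proj]
    congr 1
    ext r
    simp only [Set.mem_setOf_eq, hSadef]
    rw [hupd0 r, memT13 hF]
  have ht0 : t0 = sInf Sb := by
    have h1 := congrFun hch 1
    simp only [charPt, Matrix.cons_val_one, Matrix.head_cons, Matrix.cons_val_zero] at h1
    rw [← h1, proj]
    congr 1
    ext r
    simp only [Set.mem_setOf_eq, hSbdef]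
    rw [hupd1 r, memT13 hF]
  have haSa : a ∈ Sa := hab
  have hbSb : b ∈ Sb := hab
  have hSaNe : Sa.Nonempty := ⟨a, haSa⟩
  have hSbNe : Sb.Nonempty := ⟨b, hbSb⟩
  have hSaBdd : BddBelow Sa := by
    have h1 := slice13 hF hpos 0 sh
    simpa only [hupd0] using h1
  have hSbBdd : BddBelow Sb := by
    have h1 := slice13 hF hpos 1 sh
    simpa only [hupd1] using h1
  have hs0le : s0 ≤ a := by rw [hs0]; exact csInf_le hSaBdd haSa
  have ht0le : t0 ≤ b := by rw [ht0]; exact csInf_le hSbBdd hbSb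
  -- the value at (s0, b) is strictly below h
  have hs0b : fstHom13 (F ![s0, b]) < h := by
    have hle : fstHom13 (F ![s0, b]) ≤ h := by
      have := monoF13 hF hs0le (le_refl b); omega
    rcases lt_or_eq_of_le hle with h1 | h1
    · exact h1
    · exfalso
      obtain ⟨s, hslt, hseq⟩ := leftAttain13 hF ![s0, b]
      rw [h1] at hseq
      have hx0 : s 0 < s0 := by have := hslt 0; simpa using this
      have hx1 : s 1 < b := by have := hslt 1; simpa using this
      have hle1 : fstHom13 (F s) ≤ fstHom13 (F ![s 0, b]) := by
        refine fstHom13_mono (hF.1 ?_)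
        intro i; fin_cases i <;> simp [hx1.le]
      have hle2 : fstHom13 (F ![s 0, b]) ≤ h := by
        have := monoF13 hF (le_trans hx0.le hs0le) (le_refl b); omega
      have hmem : s 0 ∈ Sa := by
        show fstHom13 (F ![s 0, b]) = h
        omega
      have h3 : s0 ≤ s 0 := by rw [hs0]; exact csInf_le hSaBdd hmem
      linarith
  have hat0 : fstHom13 (F ![a, t0]) < h := by
    have hle : fstHom13 (F ![a, t0]) ≤ h := by
      have := monoF13 hF (le_refl a) ht0le; omega
    rcases lt_or_eq_of_le hle with h1 | h1
    · exact h1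
    · exfalso
      obtain ⟨s, hslt, hseq⟩ := leftAttain13 hF ![a, t0]
      rw [h1] at hseq
      have hx0 : s 0 < a := by have := hslt 0; simpa using this
      have hx1 : s 1 < t0 := by have := hslt 1; simpa using this
      have hle1 : fstHom13 (F s) ≤ fstHom13 (F ![a, s 1]) := by
        refine fstHom13_mono (hF.1 ?_)
        intro i; fin_cases i <;> simp [hx0.le]
      have hle2 : fstHom13 (F ![a, s 1]) ≤ h := by
        have := monoF13 hF (le_refl a) (le_trans hx1.le ht0le); omega
      have hmem : s 1 ∈ Sb := by
        show fstHom13 (F ![a, s 1]) = h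
        omega
      have h3 : t0 ≤ s 1 := by rw [ht0]; exact csInf_le hSbBdd hmem
      linarith
  have hs0a : s0 < a := by
    rcases lt_or_eq_of_le hs0le with h1 | h1
    · exact h1
    · exfalso; rw [h1] at hs0b; omega
  have ht0b : t0 < b := by
    rcases lt_or_eq_of_le ht0le with h1 | h1
    · exact h1
    · exfalso; rw [h1] at hat0; omega
  -- corner lemma
  have hcorner : ∀ x y : ℝ, s0 < x → x ≤ a → t0 < y → y ≤ b → h ≤ fstHom13 (F ![x, y]) := by
    intro x y hx1 hx2 hy1 hy2
    have hxb : fstHom13 (F ![x, b]) = h := by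
      obtain ⟨r, hrSa, hrlt⟩ := exists_lt_of_csInf_lt hSaNe (by rw [← hs0]; exact hx1)
      have hr : fstHom13 (F ![r, b]) = h := hrSa
      have h1 := monoF13 hF hrlt.le (le_refl b)
      have h2 := monoF13 hF hx2 (le_refl b)
      omega
    have hay : fstHom13 (F ![a, y]) = h := by
      obtain ⟨r, hrSb, hrlt⟩ := exists_lt_of_csInf_lt hSbNe (by rw [← ht0]; exact hy1)
      have hr : fstHom13 (F ![a, r]) = h := hrSb
      have h1 := monoF13 hF (le_refl a) hrlt.le
      have h2 := monoF13 hF (le_refl a) hy2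
      omega
    have hbox := box13 hF hx2 hy2
    omega
  constructor
  · intro t s1 s2 m j ht hs1 hs2 hm hj
    have hm' : fstHom13 (F ![s1, t]) = m := hm.2
    have hj' : fstHom13 (F ![s2, t]) = j := hj.2
    have hc := hcorner (min s2 a) (min t b) (lt_min hs2 hs0a) (min_le_right _ _)
      (lt_min ht ht0b) (min_le_right _ _)
    have hc2 := monoF13 hF (min_le_left s2 a) (le_refl (min t b))
    have hc3 := monoF13 hF hs1 (min_le_right t b)
    have hbox := box13 hF (hs1.trans hs2.le) (min_le_left t b)
    omega
  · intro s t1 t2 m j hs ht1 ht2 hm hj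
    have hm' : fstHom13 (F ![s, t1]) = m := hm.2
    have hj' : fstHom13 (F ![s, t2]) = j := hj.2
    have hc := hcorner (min s a) (min t2 b) (lt_min hs hs0a) (min_le_right _ _)
      (lt_min ht2 ht0b) (min_le_right _ _)
    have hc2 := monoF13 hF (le_refl (min s a)) (min_le_left t2 b)
    have hc3 := monoF13 hF (min_le_right s a) ht1
    have hbox := box13 hF (min_le_left s a) (ht1.trans ht2.le)
    omega
end

section
/- Let F be a two-dimensional spectral resolution on the k-perfect MV-algebra M = Γ(ℤ ⋉ G,(k,0)). Then for every i with 1 ≤ i ≤ k and T_i nonempty, the set of characteristic points of T_i has at most k elements, and the set of all characteristic points of F has at most k² elements. -/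
open Function Set

namespace S14

/-- Abstract properties of the integer level function of a 2-dim spectral resolution. -/
structure Good (f : ℝ → ℝ → ℤ) (k : ℤ) : Prop where
  mono : ∀ {x y x' y' : ℝ}, x ≤ x' → y ≤ y' → f x y ≤ f x' y'
  le_k : ∀ x y, f x y ≤ k
  superadd : ∀ {a1 a2 b1 b2 : ℝ}, a1 ≤ b1 → a2 ≤ b2 →
    f b1 a2 + f a1 b2 ≤ f b1 b2 + f a1 a2
  zero1 : ∀ y : ℝ, ∃ r, f r y = 0
  zero2 : ∀ x : ℝ, ∃ r, f x r = 0
  lc : ∀ x y : ℝ, ∃ x' y', x' < x ∧ y' < y ∧ f x' y' = f x y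

noncomputable def P1 (f : ℝ → ℝ → ℤ) (i : ℤ) (y : ℝ) : ℝ := sInf {r | f r y = i}
noncomputable def P2 (f : ℝ → ℝ → ℤ) (i : ℤ) (x : ℝ) : ℝ := sInf {r | f x r = i}

variable {f : ℝ → ℝ → ℤ} {k i : ℤ}

lemma Good.swap (hf : Good f k) : Good (fun x y => f y x) k where
  mono := fun h h' => hf.mono h' h
  le_k := fun x y => hf.le_k y x
  superadd := by
    intro a1 a2 b1 b2 h1 h2
    have := hf.superadd h2 h1
    show f a2 b1 + f b2 a1 ≤ f b2 b1 + f a2 a1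
    omega
  zero1 := hf.zero2
  zero2 := hf.zero1
  lc := by
    intro x y
    obtain ⟨y', x', hy, hx, h⟩ := hf.lc y x
    exact ⟨x', y', hx, hy, h⟩

lemma P2_swap : P2 f i = P1 (fun x y => f y x) i := rfl
lemma P1_swap : P1 f i = P2 (fun x y => f y x) i := rfl

section
variable (hf : Good f k) (hi : 1 ≤ i)
include hf hi

lemma bdd1 (y : ℝ) : BddBelow {r | f r y = i} := by
  obtain ⟨r0, hr0⟩ := hf.zero1 y
  refine ⟨r0, fun r hr => ?_⟩
  by_contra hlt
  push_neg at hlt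
  have h2 : f r y ≤ f r0 y := hf.mono hlt.le le_rfl
  have h3 : f r y = i := hr
  omega

variable {x y : ℝ} (hxy : f x y = i)
include hxy

lemma P1_le : P1 f i y ≤ x := csInf_le (bdd1 hf hi y) hxy

lemma P2_le : P2 f i x ≤ y := P1_le hf.swap hi hxy

lemma P1_lt : P1 f i y < x := by
  obtain ⟨x', y', hx', hy', h⟩ := hf.lc x y
  rw [hxy] at h
  have hx'y : f x' y = i :=
    le_antisymm (by rw [← hxy]; exact hf.mono hx'.le le_rfl)
      (by rw [← h]; exact hf.mono le_rfl hy'.le)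
  exact lt_of_le_of_lt (csInf_le (bdd1 hf hi y) hx'y) hx'

lemma P2_lt : P2 f i x < y := P1_lt hf.swap hi hxy

lemma lt_of_lt_P1 {r : ℝ} (hr : r < P1 f i y) : f r y < i := by
  have hrx : r ≤ x := hr.le.trans (P1_le hf hi hxy)
  have h1 : f r y ≤ i := by rw [← hxy]; exact hf.mono hrx le_rfl
  rcases h1.lt_or_eq with h | h
  · exact h
  · exact absurd (csInf_le (bdd1 hf hi y) h) (not_le.mpr hr)

lemma lt_of_lt_P2 {r : ℝ} (hr : r < P2 f i x) : f x r < i :=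
  lt_of_lt_P1 hf.swap hi hxy hr

lemma ge_of_gt_P1 {r : ℝ} (hr : P1 f i y < r) : i ≤ f r y := by
  obtain ⟨r', hr', hlt⟩ := exists_lt_of_csInf_lt ⟨x, hxy⟩ hr
  rw [← Set.mem_setOf_eq.mp hr']
  exact hf.mono hlt.le le_rfl

lemma ge_of_gt_P2 {r : ℝ} (hr : P2 f i x < r) : i ≤ f x r :=
  ge_of_gt_P1 hf.swap hi hxy hr

lemma key {u v : ℝ} (hu : P1 f i y < u) (hv : P2 f i x < v) : i ≤ f u v := by
  rcases le_or_gt u x with hux | hux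
  · rcases le_or_gt v y with hvy | hvy
    · have h1 := hf.superadd hux hvy
      have h2 := ge_of_gt_P1 hf hi hxy hu
      have h3 := ge_of_gt_P2 hf hi hxy hv
      omega
    · exact (ge_of_gt_P1 hf hi hxy hu).trans (hf.mono le_rfl hvy.le)
  · rcases le_or_gt v y with hvy | hvy
    · exact (ge_of_gt_P2 hf hi hxy hv).trans (hf.mono hux.le le_rfl)
    · rw [← hxy]; exact hf.mono hux.le hvy.le

lemma rect {u v : ℝ} (hu1 : P1 f i y < u) (hu2 : u ≤ x) (hv1 : P2 f i x < v)
    (hv2 : v ≤ y) : f u v = i :=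
  le_antisymm (by rw [← hxy]; exact hf.mono hu2 hv2) (key hf hi hxy hu1 hv1)

end

/-- `p` is a characteristic point of the level set `T_i`. -/
def IsCP (f : ℝ → ℝ → ℤ) (i : ℤ) (p : ℝ × ℝ) : Prop :=
  ∃ x y, f x y = i ∧ p.1 = P1 f i y ∧ p.2 = P2 f i x

section
variable (hf : Good f k) (hi : 1 ≤ i)
include hf hi

lemma cp_eq {p q : ℝ × ℝ} (hp : IsCP f i p) (hq : IsCP f i q)
    (h1 : p.1 ≤ q.1) (h2 : p.2 ≤ q.2) : p = q := by
  obtain ⟨x, y, hxy, hp1, hp2⟩ := hp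
  obtain ⟨X, Y, hXY, hq1, hq2⟩ := hq
  have hXgt : q.1 < X := by rw [hq1]; exact P1_lt hf hi hXY
  have hYgt : q.2 < Y := by rw [hq2]; exact P2_lt hf hi hXY
  have hle1 : q.1 ≤ p.1 := by
    by_contra hlt
    push_neg at hlt
    set u := min X ((p.1 + q.1) / 2) with hu
    have hup : p.1 < u := lt_min (h1.trans_lt hXgt) (by linarith)
    have huq : u < q.1 := (min_le_right _ _).trans_lt (by linarith)
    have huv : f u Y = i := by
      refine le_antisymm ?_ ?_
      · rw [← hXY]; exact hf.mono (min_le_left _ _) le_rfl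
      · refine key hf hi hxy ?_ ?_
        · rwa [← hp1]
        · rw [← hp2]; exact h2.trans_lt hYgt
    have hfin : P1 f i Y ≤ u := csInf_le (bdd1 hf hi Y) huv
    rw [← hq1] at hfin
    exact absurd (hfin.trans_lt huq) (lt_irrefl _)
  have hle2 : q.2 ≤ p.2 := by
    by_contra hlt
    push_neg at hlt
    set v := min Y ((p.2 + q.2) / 2) with hv
    have hvp : p.2 < v := lt_min (h2.trans_lt hYgt) (by linarith)
    have hvq : v < q.2 := (min_le_right _ _).trans_lt (by linarith)
    have huv : f X v = i := by
      refine le_antisymm ?_ ?_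
      · rw [← hXY]; exact hf.mono le_rfl (min_le_left _ _)
      · refine key hf hi hxy ?_ ?_
        · rw [← hp1]; exact h1.trans_lt hXgt
        · rwa [← hp2]
    have hfin : P2 f i X ≤ v := csInf_le (bdd1 hf.swap hi X) huv
    rw [← hq2] at hfin
    exact absurd (hfin.trans_lt hvq) (lt_irrefl _)
  exact Prod.ext (le_antisymm h1 hle1) (le_antisymm h2 hle2)

lemma cp_fst_inj {p q : ℝ × ℝ} (hp : IsCP f i p) (hq : IsCP f i q)
    (h : p.1 = q.1) : p = q := by
  rcases le_total p.2 q.2 with h2 | h2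
  · exact cp_eq hf hi hp hq h.le h2
  · exact (cp_eq hf hi hq hp h.ge h2).symm

lemma cp_anti {p q : ℝ × ℝ} (hp : IsCP f i p) (hq : IsCP f i q)
    (h1 : p.1 < q.1) : q.2 < p.2 := by
  by_contra hle
  push_neg at hle
  exact absurd (cp_eq hf hi hp hq h1.le hle) (by intro h; rw [h] at h1; exact lt_irrefl _ h1)

/-- The key step: two characteristic points at the same level `i` in strict
staircase position force a level `≥ i + 1` at the upper-right corner. -/
lemma step {x y X Y : ℝ} (hxy : f x y = i) (hXY : f X Y = i)
    (h1 : P1 f i y < P1 f i Y) (h2 : P2 f i X < P2 f i x)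
    {U V : ℝ} (hU1 : P1 f i Y < U) (hU2 : U ≤ X)
    (hV1 : P2 f i x < V) (hV2 : V ≤ y) : i + 1 ≤ f U V := by
  obtain ⟨u, hu1, hu2⟩ := exists_between (lt_min (P1_lt hf hi hxy) h1 :
    P1 f i y < min x (P1 f i Y))
  obtain ⟨v, hv1, hv2⟩ := exists_between (lt_min (P2_lt hf hi hXY) h2 :
    P2 f i X < min Y (P2 f i x))
  have hux : u ≤ x := hu2.le.trans (min_le_left _ _)
  have huq : u < P1 f i Y := hu2.trans_le (min_le_right _ _)
  have hvY : v ≤ Y := hv2.le.trans (min_le_left _ _)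
  have hvp : v < P2 f i x := hv2.trans_le (min_le_right _ _)
  have hUv : f U v = i := rect hf hi hXY hU1 hU2 hv1 hvY
  have huV : f u V = i := rect hf hi hxy hu1 hux hV1 hV2
  have hLL : f u v < i := by
    have h1 : f u v ≤ f u Y := hf.mono le_rfl hvY
    have h2 : f u Y < i := lt_of_lt_P1 hf hi hXY huq
    omega
  have hbox := hf.superadd (hu2.le.trans ((min_le_right _ _).trans hU1.le))
    (hv2.le.trans ((min_le_right _ _).trans hV1.le))
  omega

lemma ladder {n : ℕ} (w1 w2 : ℕ → ℝ) (hw : ∀ j ≤ n, f (w1 j) (w2 j) = i)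
    (hs1 : ∀ a b, a < b → b ≤ n → P1 f i (w2 a) < P1 f i (w2 b))
    (hs2 : ∀ a b, a < b → b ≤ n → P2 f i (w1 b) < P2 f i (w1 a)) :
    ∀ (d j l : ℕ), l = j + d → l ≤ n → ∀ U V, P1 f i (w2 l) < U → U ≤ w1 l →
      P2 f i (w1 j) < V → V ≤ w2 j → i + d ≤ f U V := by
  intro d
  induction d with
  | zero =>
    intro j l hl hln U V hU1 hU2 hV1 hV2
    have hjl : j = l := by omega
    subst hjl
    have hfj : f U V = i := rect hf hi (hw j hln) hU1 hU2 hV1 hV2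
    push_cast
    omega
  | succ d ih =>
    intro j l hl hln U V hU1 hU2 hV1 hV2
    have hl'l : l = (j + d) + 1 := by omega
    have hl'n : j + d ≤ n := by omega
    have hl'lt : j + d < l := by omega
    have hp1U : P1 f i (w2 (j + d)) < U := (hs1 (j + d) l hl'lt hln).trans hU1
    obtain ⟨u, hu1, hu2⟩ := exists_between
      (lt_min (P1_lt hf hi (hw (j + d) hl'n)) hp1U :
        P1 f i (w2 (j + d)) < min (w1 (j + d)) U)
    have hp2le : P2 f i (w1 (j + d)) ≤ P2 f i (w1 j) := by
      rcases Nat.eq_or_lt_of_le (Nat.le_add_right j d) with h | h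
      · rw [← h]
      · exact (hs2 j (j + d) h hl'n).le
    have hp2V : P2 f i (w1 (j + d)) < V := hp2le.trans_lt hV1
    obtain ⟨v, hv1, hv2⟩ := exists_between
      (lt_min (P2_lt hf hi (hw (j + d) hl'n)) hp2V :
        P2 f i (w1 (j + d)) < min (w2 (j + d)) V)
    have hu_le : u ≤ w1 (j + d) := hu2.le.trans (min_le_left _ _)
    have hu_ltU : u < U := hu2.trans_le (min_le_right _ _)
    have hv_le : v ≤ w2 (j + d) := hv2.le.trans (min_le_left _ _)
    have hv_ltV : v < V := hv2.trans_le (min_le_right _ _)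
    have hIH : i + d ≤ f u V := ih j (j + d) rfl hl'n u V hu1 hu_le hV1 hV2
    have hstep : i + 1 ≤ f U v :=
      step hf hi (hw (j + d) hl'n) (hw l hln) (hs1 (j + d) l hl'lt hln)
        (hs2 (j + d) l hl'lt hln) hU1 hU2 hv1 hv_le
    have hLL : f u v = i := rect hf hi (hw (j + d) hl'n) hu1 hu_le hv1 hv_le
    have hbox := hf.superadd hu_ltU.le hv_ltV.le
    push_cast
    omega

end

theorem card_le (hf : Good f k) (hi : 1 ≤ i) (hik : i ≤ k)
    (S : Finset (ℝ × ℝ)) (hS : ∀ p ∈ S, IsCP f i p) : (S.card : ℤ) ≤ k := by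
  rcases Nat.eq_zero_or_pos S.card with h0 | hpos
  · rw [h0]; push_cast; omega
  obtain ⟨n, hn⟩ : ∃ n, S.card = n + 1 := ⟨S.card - 1, by omega⟩
  -- first coordinates
  have hinj : Set.InjOn Prod.fst (S : Set (ℝ × ℝ)) := by
    intro p hp q hq h
    exact cp_fst_inj hf hi (hS p hp) (hS q hq) h
  set X := S.image Prod.fst with hX
  have hXcard : X.card = n + 1 := by
    rw [hX, Finset.card_image_of_injOn hinj, hn]
  let e := X.orderIsoOfFin hXcard
  have hmem : ∀ j : Fin (n + 1), ∃ p ∈ S, p.1 = (e j : ℝ) := by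
    intro j
    have : (e j : ℝ) ∈ X := (e j).2
    obtain ⟨p, hp, hpe⟩ := Finset.mem_image.mp this
    -- hpe : p.1 = e j
    exact ⟨p, hp, hpe.symm.symm⟩
  choose P hPS hPe using hmem
  have hPcp : ∀ j, IsCP f i (P j) := fun j => hS _ (hPS j)
  choose wx wy hw hP1 hP2 using hPcp
  -- ℕ-indexed versions
  set W1 : ℕ → ℝ := fun j => wx ⟨min j n, by omega⟩ with hW1
  set W2 : ℕ → ℝ := fun j => wy ⟨min j n, by omega⟩ with hW2
  have hWeq : ∀ j (hj : j ≤ n), (⟨min j n, by omega⟩ : Fin (n+1)) = ⟨j, by omega⟩ := by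
    intro j hj
    simp [Nat.min_eq_left hj]
  have hfst_mono : ∀ a b : Fin (n+1), a < b → (P a).1 < (P b).1 := by
    intro a b hab
    rw [hPe a, hPe b]
    exact_mod_cast e.strictMono hab
  have hsnd_anti : ∀ a b : Fin (n+1), a < b → (P b).2 < (P a).2 := by
    intro a b hab
    exact cp_anti hf hi (hS _ (hPS a)) (hS _ (hPS b)) (hfst_mono a b hab)
  have hwn : ∀ j ≤ n, f (W1 j) (W2 j) = i := by
    intro j hj
    rw [hW1, hW2]
    simp only [hWeq j hj]
    exact hw _
  have hs1 : ∀ a b, a < b → b ≤ n → P1 f i (W2 a) < P1 f i (W2 b) := by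
    intro a b hab hb
    rw [hW2]
    simp only [hWeq a (by omega), hWeq b hb]
    have := hfst_mono ⟨a, by omega⟩ ⟨b, by omega⟩ (by exact_mod_cast hab)
    rwa [hP1, hP1] at this
  have hs2 : ∀ a b, a < b → b ≤ n → P2 f i (W1 b) < P2 f i (W1 a) := by
    intro a b hab hb
    rw [hW1]
    simp only [hWeq a (by omega), hWeq b hb]
    have := hsnd_anti ⟨a, by omega⟩ ⟨b, by omega⟩ (by exact_mod_cast hab)
    rwa [hP2, hP2] at this
  have := ladder hf hi W1 W2 hwn hs1 hs2 n 0 n (by omega) le_rfl (W1 n) (W2 0)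
    (P1_lt hf hi (hwn n le_rfl)) le_rfl (P2_lt hf hi (hwn 0 (by omega))) le_rfl
  have hk := hf.le_k (W1 n) (W2 0)
  rw [hn]
  push_cast
  omega

end S14

namespace S14
variable {f : ℝ → ℝ → ℤ} {k i : ℤ}

theorem cp_set_finite_ncard (hf : Good f k) (hi : 1 ≤ i) (hik : i ≤ k) :
    {p : ℝ × ℝ | IsCP f i p}.Finite ∧ {p : ℝ × ℝ | IsCP f i p}.ncard ≤ k.toNat := by
  have hfin : {p : ℝ × ℝ | IsCP f i p}.Finite := by
    by_contra hinf
    obtain ⟨t, hts, htc⟩ := Set.Infinite.exists_subset_card_eq hinf (k.toNat + 1)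
    have := card_le hf hi hik t (fun p hp => hts hp)
    rw [htc] at this
    omega
  refine ⟨hfin, ?_⟩
  have h1 := card_le hf hi hik hfin.toFinset
    (fun p hp => (Set.Finite.mem_toFinset hfin).mp hp)
  have h2 : {p : ℝ × ℝ | IsCP f i p}.ncard = hfin.toFinset.card :=
    Set.ncard_eq_toFinset_card _ hfin
  omega

end S14

theorem stmt_14 {G : Type*}
    [AddCommGroup G] [Lattice G] [CovariantClass G G (· + ·) (· ≤ ·)]
    (hG : DedekindSigmaComplete G) (k : ℕ) (hk : 1 ≤ k)
    (F : (Fin 2 → ℝ) → ℤ ×ₗ G) (hF : IsSpectralResolution (k : ℤ) 2 F) :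
    (∀ i : ℕ, 1 ≤ i → i ≤ k → (TSet (k : ℤ) F (i : ℤ)).Nonempty →
      (charPts (k : ℤ) F (i : ℤ)).Finite ∧ (charPts (k : ℤ) F (i : ℤ)).ncard ≤ k) ∧
    (charPoints (k : ℤ) F).Finite ∧ (charPoints (k : ℤ) F).ncard ≤ k * k := by
  classical
  obtain ⟨hmono, hlub, hleft, hglb, hbox⟩ := hF
  set lv : (ℤ ×ₗ G) → ℤ := fun z => (ofLex z).1 with hlvdef
  -- lex order helpers
  have hle_iff : ∀ w z : ℤ ×ₗ G,
      w ≤ z ↔ (lv w < lv z ∨ (lv w = lv z ∧ (ofLex w).2 ≤ (ofLex z).2)) := by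
    intro w z
    exact Prod.Lex.le_iff (x := w) (y := z)
  have hle2 : ∀ w z : ℤ ×ₗ G, w ≤ z → lv w ≤ lv z := by
    intro w z h
    rcases (hle_iff w z).mp h with h | h
    · exact h.le
    · exact h.1.le
  have hle1 : ∀ w z : ℤ ×ₗ G, lv w < lv z → w ≤ z := fun w z h =>
    (hle_iff w z).mpr (Or.inl h)
  -- bottom and top
  have hbot : ∀ s, toLex ((0:ℤ), (0:G)) ≤ F s := by
    intro s
    exact (hglb 0 s).1 ⟨s 0, by rw [Function.update_eq_self]⟩
  have htop : ∀ s, F s ≤ toLex (((k:ℕ):ℤ), (0:G)) := fun s => hlub.1 ⟨s, rfl⟩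
  have hbot' : ∀ s, (0:ℤ) ≤ lv (F s) := fun s => hle2 _ _ (hbot s)
  have htop' : ∀ s, lv (F s) ≤ (k:ℤ) := fun s => hle2 _ _ (htop s)
  -- vector helpers
  have hvec : ∀ s : Fin 2 → ℝ, ![s 0, s 1] = s := by
    intro s; funext j; fin_cases j <;> rfl
  have hupd0 : ∀ (s : Fin 2 → ℝ) (r : ℝ), Function.update s 0 r = ![r, s 1] := by
    intro s r; funext j; fin_cases j <;> simp [Function.update]
  have hupd1 : ∀ (s : Fin 2 → ℝ) (r : ℝ), Function.update s 1 r = ![s 0, r] := by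
    intro s r; funext j; fin_cases j <;> simp [Function.update]
  have hvle : ∀ {x y X Y : ℝ}, x ≤ X → y ≤ Y → (![x,y] : Fin 2 → ℝ) ≤ ![X,Y] := by
    intro x y X Y h1 h2 j; fin_cases j <;> simpa
  -- every axis-parallel line reaches level 0
  have hzero : ∀ (s : Fin 2 → ℝ) (j : Fin 2), ∃ r, lv (F (Function.update s j r)) = 0 := by
    intro s j
    by_contra hno
    push_neg at hno
    have hpos : ∀ r, 1 ≤ lv (F (Function.update s j r)) := by
      intro r
      have h0 := hbot' (Function.update s j r)
      have h1 := hno r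
      omega
    have hG0 : ∀ h : G, h = 0 := by
      have hle0 : ∀ h : G, h ≤ 0 := by
        intro h
        have hlow : toLex ((0:ℤ), h) ∈ lowerBounds
            {y | ∃ r, y = F (Function.update s j r)} := by
          rintro z ⟨r, rfl⟩
          have h2 : (0:ℤ) < lv (F (Function.update s j r)) := by have := hpos r; omega
          exact hle1 _ _ h2
        have h1 := (hglb j s).2 hlow
        rcases (hle_iff _ _).mp h1 with h' | h'
        · exact absurd h' (lt_irrefl _)
        · exact h'.2
      intro h
      exact le_antisymm (hle0 h) (neg_nonpos.mp (hle0 (-h)))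
    have hlb2 : toLex ((1:ℤ), (0:G)) ∈ lowerBounds
        {y | ∃ r, y = F (Function.update s j r)} := by
      rintro z ⟨r, rfl⟩
      rcases lt_or_eq_of_le (hpos r) with h | h
      · exact hle1 _ _ h
      · refine (hle_iff _ _).mpr (Or.inr ⟨h, ?_⟩)
        rw [hG0 ((ofLex (F (Function.update s j r))).2)]
        exact le_rfl
    have h1 := (hglb j s).2 hlb2
    rcases (hle_iff _ _).mp h1 with h' | h'
    · have : (1:ℤ) < 0 := h'
      omega
    · have : (1:ℤ) = 0 := h'.1
      omega
  -- left continuity: level is attained strictly below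
  have hlcF : ∀ t : Fin 2 → ℝ, ∃ s, (∀ j, s j < t j) ∧ lv (F s) = lv (F t) := by
    intro t
    by_contra hno
    push_neg at hno
    have hub : ∀ z ∈ {y | ∃ s : Fin 2 → ℝ, (∀ i, s i < t i) ∧ y = F s},
        lv z ≤ lv (F t) - 1 := by
      rintro z ⟨s, hs, rfl⟩
      have h1 : lv (F s) ≤ lv (F t) := hle2 _ _ (hmono (fun j => (hs j).le))
      have h2 := hno s hs
      omega
    have hG0 : ∀ w : G, w = 0 := by
      have hge : ∀ h : G, (ofLex (F t)).2 ≤ h := by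
        intro h
        have hub1 : toLex (lv (F t), h) ∈ upperBounds
            {y | ∃ s : Fin 2 → ℝ, (∀ i, s i < t i) ∧ y = F s} := by
          intro z hz
          have h2 := hub z hz
          have h3 : lv z < lv (F t) := by omega
          exact hle1 _ _ h3
        have h1 := (hleft t).2 hub1
        rcases (hle_iff _ _).mp h1 with h' | h'
        · have hcon : lv (F t) < lv (F t) := h'
          exact absurd hcon (lt_irrefl _)
        · exact h'.2
      have hge0 : ∀ w : G, (0:G) ≤ w := by
        intro w
        have h1 := hge ((ofLex (F t)).2 + w)
        exact (le_add_iff_nonneg_right _).mp h1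
      intro w
      exact le_antisymm (by simpa using neg_nonneg.mp (by simpa using hge0 (-w))) (hge0 w)
    have hub2 : toLex (lv (F t) - 1, (0:G)) ∈ upperBounds
        {y | ∃ s : Fin 2 → ℝ, (∀ i, s i < t i) ∧ y = F s} := by
      intro z hz
      have h1 := hub z hz
      rcases lt_or_eq_of_le h1 with h | h
      · exact hle1 _ _ h
      · refine (hle_iff _ _).mpr (Or.inr ⟨h, ?_⟩)
        rw [hG0 ((ofLex z).2)]
        exact le_rfl
    have h2 := (hleft t).2 hub2
    rcases (hle_iff _ _).mp h2 with h' | h'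
    · have hcon : lv (F t) < lv (F t) - 1 := h'
      omega
    · have hcon : lv (F t) = lv (F t) - 1 := h'.1
      omega
  -- the level function on ℝ²
  set f : ℝ → ℝ → ℤ := fun x y => lv (F ![x, y]) with hfdef
  -- box sum computation
  have hboxval : ∀ x y X Y : ℝ,
      lv (boxSum F ![x,y] ![X,Y]) = f X Y + f x y - f X y - f x Y := by
    intro x y X Y
    have hU : (Finset.univ : Finset (Finset (Fin 2))) = {∅, {0}, {1}, {0,1}} := by decide
    have hadd : ∀ w z : ℤ ×ₗ G, lv (w + z) = lv w + lv z := fun _ _ => rfl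
    have hsmul : ∀ (m : ℤ) (z : ℤ ×ₗ G), lv (m • z) = m * lv z := fun _ _ => rfl
    have e1 : (fun i => if i ∈ (∅ : Finset (Fin 2)) then (![X,Y] : Fin 2 → ℝ) i
        else ![x,y] i) = ![x,y] := by funext j; fin_cases j <;> simp
    have e2 : (fun i => if i ∈ ({0} : Finset (Fin 2)) then (![X,Y] : Fin 2 → ℝ) i
        else ![x,y] i) = ![X,y] := by funext j; fin_cases j <;> simp
    have e3 : (fun i => if i ∈ ({1} : Finset (Fin 2)) then (![X,Y] : Fin 2 → ℝ) i
        else ![x,y] i) = ![x,Y] := by funext j; fin_cases j <;> simp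
    have e4 : (fun i => if i ∈ ({0,1} : Finset (Fin 2)) then (![X,Y] : Fin 2 → ℝ) i
        else ![x,y] i) = ![X,Y] := by funext j; fin_cases j <;> simp
    rw [boxSum, hU, Finset.sum_insert (by decide), Finset.sum_insert (by decide),
      Finset.sum_insert (by decide), Finset.sum_singleton, e1, e2, e3, e4,
      hadd, hadd, hadd, hsmul, hsmul, hsmul, hsmul]
    norm_num
    ring
  -- Good structure
  have hGood : S14.Good f (k:ℤ) := by
    refine ⟨?_, ?_, ?_, ?_, ?_, ?_⟩
    · intro x y X Y h1 h2
      exact hle2 _ _ (hmono (hvle h1 h2))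
    · intro x y
      exact htop' ![x,y]
    · intro a1 a2 b1 b2 h1 h2
      have h0 := (hbox ![a1,a2] ![b1,b2] (hvle h1 h2)).1
      have h0' : (0:ℤ) ≤ lv (boxSum F ![a1,a2] ![b1,b2]) := hle2 _ _ h0
      rw [hboxval a1 a2 b1 b2] at h0'
      omega
    · intro y
      obtain ⟨r, hr⟩ := hzero ![0, y] 0
      rw [hupd0] at hr
      exact ⟨r, by simpa using hr⟩
    · intro x
      obtain ⟨r, hr⟩ := hzero ![x, 0] 1
      rw [hupd1] at hr
      exact ⟨r, by simpa using hr⟩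
    · intro x y
      obtain ⟨s, hs, hval⟩ := hlcF ![x, y]
      refine ⟨s 0, s 1, by simpa using hs 0, by simpa using hs 1, ?_⟩
      show lv (F ![s 0, s 1]) = lv (F ![x,y])
      rw [hvec s, hval]
  -- membership translations
  have hTmem : ∀ (h : ℤ) (s : Fin 2 → ℝ), s ∈ TSet ((k:ℕ):ℤ) F h ↔ lv (F s) = h := by
    intro h s
    constructor
    · exact fun hs => hs.2
    · intro hs
      exact ⟨⟨hbot s, htop s⟩, hs⟩
  -- injective pairing
  have hτinj : Function.Injective (fun p : Fin 2 → ℝ => (p 0, p 1)) := by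
    intro p q h
    have h0 : p 0 = q 0 := congrArg Prod.fst h
    have h1 : p 1 = q 1 := congrArg Prod.snd h
    funext j; fin_cases j <;> assumption
  -- per-level bound
  have hmain : ∀ h : ℤ, 1 ≤ h → h ≤ (k:ℤ) →
      (charPts ((k:ℕ):ℤ) F h).Finite ∧ (charPts ((k:ℕ):ℤ) F h).ncard ≤ k := by
    intro h h1 h2
    obtain ⟨hfin, hcard⟩ := S14.cp_set_finite_ncard hGood h1 h2
    have hsub : (fun p : Fin 2 → ℝ => (p 0, p 1)) '' charPts ((k:ℕ):ℤ) F h ⊆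
        {p : ℝ × ℝ | S14.IsCP f h p} := by
      rintro _ ⟨p, ⟨s, hsT, rfl⟩, rfl⟩
      have hfs : f (s 0) (s 1) = h := by
        show lv (F ![s 0, s 1]) = h
        rw [hvec s]
        exact (hTmem h s).mp hsT
      refine ⟨s 0, s 1, hfs, ?_, ?_⟩
      · show proj ((k:ℕ):ℤ) F h s 0 = S14.P1 f h (s 1)
        unfold proj S14.P1
        congr 1
        ext r
        rw [Set.mem_setOf_eq, Set.mem_setOf_eq, hTmem, hupd0]
      · show proj ((k:ℕ):ℤ) F h s 1 = S14.P2 f h (s 0)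
        unfold proj S14.P2
        congr 1
        ext r
        rw [Set.mem_setOf_eq, Set.mem_setOf_eq, hTmem, hupd1]
    have hfinP : (charPts ((k:ℕ):ℤ) F h).Finite :=
      Set.Finite.of_finite_image (hfin.subset hsub) (hτinj.injOn)
    refine ⟨hfinP, ?_⟩
    have hi1 : (charPts ((k:ℕ):ℤ) F h).ncard =
        ((fun p : Fin 2 → ℝ => (p 0, p 1)) '' charPts ((k:ℕ):ℤ) F h).ncard :=
      (Set.ncard_image_of_injective _ hτinj).symm
    have hi2 := Set.ncard_le_ncard hsub hfin
    calc (charPts ((k:ℕ):ℤ) F h).ncard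
        = ((fun p : Fin 2 → ℝ => (p 0, p 1)) '' charPts ((k:ℕ):ℤ) F h).ncard := hi1
      _ ≤ {p : ℝ × ℝ | S14.IsCP f h p}.ncard := hi2
      _ ≤ ((k:ℕ):ℤ).toNat := hcard
      _ = k := by simp
  constructor
  · intro i hi1 hi2 _
    have := hmain (i:ℤ) (by exact_mod_cast hi1) (by exact_mod_cast hi2)
    exact this
  · -- all characteristic points
    have hIcc : ∀ h ∈ Finset.Icc (1:ℤ) ((k:ℕ):ℤ), 1 ≤ h ∧ h ≤ (k:ℤ) := by
      intro h hh
      exact Finset.mem_Icc.mp hh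
    set big : Finset (Fin 2 → ℝ) := (Finset.Icc (1:ℤ) ((k:ℕ):ℤ)).attach.biUnion
      (fun h => ((hmain h.1 (hIcc h.1 h.2).1 (hIcc h.1 h.2).2).1.toFinset)) with hbig
    have hsubU : charPoints ((k:ℕ):ℤ) F ⊆ ↑big := by
      rintro p ⟨h, h0, hk2, hp⟩
      have hmem : h ∈ Finset.Icc (1:ℤ) ((k:ℕ):ℤ) := Finset.mem_Icc.mpr ⟨by omega, hk2⟩
      refine Finset.mem_coe.mpr (Finset.mem_biUnion.mpr
        ⟨⟨h, hmem⟩, Finset.mem_attach _ _, ?_⟩)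
      exact ((hmain h (hIcc h hmem).1 (hIcc h hmem).2).1.mem_toFinset).mpr hp
    have hfinC : (charPoints ((k:ℕ):ℤ) F).Finite :=
      Set.Finite.subset big.finite_toSet hsubU
    refine ⟨hfinC, ?_⟩
    have h1 : (charPoints ((k:ℕ):ℤ) F).ncard ≤ (↑big : Set (Fin 2 → ℝ)).ncard :=
      Set.ncard_le_ncard hsubU big.finite_toSet
    rw [Set.ncard_coe_finset] at h1
    have h2 := Finset.card_biUnion_le (s := (Finset.Icc (1:ℤ) ((k:ℕ):ℤ)).attach)
      (t := fun h => ((hmain h.1 (hIcc h.1 h.2).1 (hIcc h.1 h.2).2).1.toFinset))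
    have h3 : ∑ h ∈ (Finset.Icc (1:ℤ) ((k:ℕ):ℤ)).attach,
        ((hmain h.1 (hIcc h.1 h.2).1 (hIcc h.1 h.2).2).1.toFinset).card ≤
        (Finset.Icc (1:ℤ) ((k:ℕ):ℤ)).attach.card * k := by
      rw [← smul_eq_mul]
      refine Finset.sum_le_card_nsmul _ _ _ ?_
      intro h _
      have hb := (hmain h.1 (hIcc h.1 h.2).1 (hIcc h.1 h.2).2).2
      rwa [Set.ncard_eq_toFinset_card _ (hmain h.1 (hIcc h.1 h.2).1 (hIcc h.1 h.2).2).1] at hb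
    have h4 : (Finset.Icc (1:ℤ) ((k:ℕ):ℤ)).attach.card = k := by
      rw [Finset.card_attach, Int.card_Icc]
      omega
    rw [h4] at h3
    exact h1.trans (h2.trans h3)
end

section
/- Let F be a two-dimensional spectral resolution on the k-perfect MV-algebra M = Γ(ℤ ⋉ G,(k,0)). Then for every i with 1 ≤ i ≤ k and T_i nonempty, the set of characteristic points of T_i has at most k − i + 1 elements; consequently, the set of all characteristic points of F has at most k(k+1)/2 elements. -/
open Function Set

set_option linter.unusedSectionVars false

namespace Stmt19Aux

noncomputable def cInf (g : ℝ → ℝ → ℤ) (i : ℤ) (x : ℝ) : ℝ := sInf {r | g x r = i}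

variable {g : ℝ → ℝ → ℤ} {i : ℤ}

section Col
variable (hm : ∀ ⦃x x' : ℝ⦄, x ≤ x' → ∀ ⦃y y' : ℝ⦄, y ≤ y' → g x y ≤ g x' y')
  (h0 : ∀ x : ℝ, ∃ r, g x r = 0) (hi : 1 ≤ i)

include hm h0 hi

lemma bddBelow_colSet (x : ℝ) : BddBelow {r | g x r = i} := by
  obtain ⟨r₀, hr₀⟩ := h0 x
  refine ⟨r₀, fun r hr => ?_⟩
  by_contra h
  push_neg at h
  have := hm (le_refl x) h.le
  rw [hr₀, hr] at this
  omega

lemma cInf_le {x b : ℝ} (hgb : g x b = i) : cInf g i x ≤ b :=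
  csInf_le (bddBelow_colSet hm h0 hi x) hgb

lemma eq_of_gt {x b r : ℝ} (hgb : g x b = i) (h1 : cInf g i x < r) (h2 : r ≤ b) :
    g x r = i := by
  obtain ⟨r', hr', hlt⟩ := exists_lt_of_csInf_lt ⟨b, hgb⟩ h1
  have h3 : g x r' ≤ g x r := hm le_rfl hlt.le
  have h4 : g x r ≤ g x b := hm le_rfl h2
  rw [hr'] at h3; rw [hgb] at h4; omega

lemma le_of_lt_cInf {x b r : ℝ} (hgb : g x b = i) (h1 : r < cInf g i x) :
    g x r ≤ i - 1 := by
  have hrb : r ≤ b := h1.le.trans (cInf_le hm h0 hi hgb)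
  have h2 : g x r ≤ g x b := hm le_rfl hrb
  rw [hgb] at h2
  have h3 : g x r ≠ i := fun h => absurd (csInf_le (bddBelow_colSet hm h0 hi x) h) (not_le.2 h1)
  omega

lemma attain {x b : ℝ} (hgb : g x b = i) {δ : ℝ} (hδ : 0 < δ) :
    ∃ r, g x r = i ∧ cInf g i x ≤ r ∧ r ≤ cInf g i x + δ ∧ r ≤ b := by
  rcases (cInf_le hm h0 hi hgb).lt_or_eq with h | h
  · refine ⟨min b (cInf g i x + δ/2), ?_, ?_, ?_, min_le_left _ _⟩
    · exact eq_of_gt hm h0 hi hgb (lt_min h (by linarith)) (min_le_left _ _)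
    · exact le_min h.le (by linarith)
    · exact (min_le_right _ _).trans (by linarith)
  · exact ⟨b, hgb, h.le, by rw [← h]; linarith, le_rfl⟩

lemma anti {x x' b b' : ℝ} (hx : x ≤ x') (hgb : g x b = i) (hgb' : g x' b' = i) :
    cInf g i x' ≤ cInf g i x := by
  refine le_of_forall_pos_le_add (fun δ hδ => ?_)
  obtain ⟨r, hgr, _, hr2, _⟩ := attain hm h0 hi hgb hδ
  have h1 : g x r ≤ g x' r := hm hx le_rfl
  rw [hgr] at h1
  rcases h1.lt_or_eq with h | h
  · have hb' : b' < r := by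
      by_contra hb
      push_neg at hb
      have := hm (le_refl x') hb
      rw [hgb'] at this; omega
    exact ((cInf_le hm h0 hi hgb').trans hb'.le).trans hr2
  · exact (csInf_le (bddBelow_colSet hm h0 hi x') h.symm).trans hr2

end Col

section Main

variable (hm : ∀ ⦃x x' : ℝ⦄, x ≤ x' → ∀ ⦃y y' : ℝ⦄, y ≤ y' → g x y ≤ g x' y')
  (h0c : ∀ x : ℝ, ∃ r, g x r = 0) (h0r : ∀ y : ℝ, ∃ r, g r y = 0)
  (hsuper : ∀ ⦃x x' : ℝ⦄, x ≤ x' → ∀ ⦃y y' : ℝ⦄, y ≤ y' → g x y' + g x' y ≤ g x y + g x' y')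
  (hi : 1 ≤ i)

include hm hi h0c h0r hsuper

/-- If `p = π(w)` and `q = π(v)` are characteristic points with `p.1 < q.1` and
`p.2 ≤ q.2`, contradiction. -/
lemma noDom
    (hleft : ∀ x y : ℝ, ∃ x' < x, ∃ y' < y, g x' y' = g x y)
    {w0 w1 v0 v1 : ℝ} (hw : g w0 w1 = i) (hv : g v0 v1 = i)
    (h0lt : cInf (flip g) i w1 < cInf (flip g) i v1)
    (h1le : cInf g i w0 ≤ cInf g i v0) : False := by
  have hmf : ∀ ⦃x x' : ℝ⦄, x ≤ x' → ∀ ⦃y y' : ℝ⦄, y ≤ y' → (flip g) x y ≤ (flip g) x' y' :=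
    fun _ _ hx _ _ hy => hm hy hx
  have hwf : flip g w1 w0 = i := hw
  have hvf : flip g v1 v0 = i := hv
  -- left-attainment point at v
  obtain ⟨s0, hs0, s1, hs1, hs⟩ := hleft v0 v1
  rw [hv] at hs
  have hgv0s1 : g v0 s1 = i := by
    have h1 : g s0 s1 ≤ g v0 s1 := hm hs0.le le_rfl
    have h2 : g v0 s1 ≤ g v0 v1 := hm le_rfl hs1.le
    rw [hs] at h1; rw [hv] at h2; omega
  have hgs0v1 : g s0 v1 = i := by
    have h1 : g s0 s1 ≤ g s0 v1 := hm le_rfl hs1.le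
    have h2 : g s0 v1 ≤ g v0 v1 := hm hs0.le le_rfl
    rw [hs] at h1; rw [hv] at h2; omega
  have hq1s : cInf g i v0 ≤ s1 := csInf_le (bddBelow_colSet hm h0c hi v0) hgv0s1
  have hq0s : cInf (flip g) i v1 ≤ s0 :=
    csInf_le (bddBelow_colSet hmf h0r hi v1) hgs0v1
  -- v1 < w1
  have hv1w1 : v1 < w1 := by
    by_contra h
    push_neg at h
    exact absurd (anti hmf h0r hi h hwf hvf) (not_le.2 h0lt)
  -- pick x ≈ p0 with g x w1 = i and x < q0
  obtain ⟨x, hgx, hxge, hxle, hxw0⟩ := attain hmf h0r hi hwf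
    (δ := (cInf (flip g) i v1 - cInf (flip g) i w1) / 2) (by linarith)
  have hgx' : g x w1 = i := hgx
  have hxq0 : x < cInf (flip g) i v1 := by linarith
  by_cases hsw : s0 ≤ w0
  · -- Case s0 ≤ w0
    have hsf : flip g s1 s0 = i := hs
    have h1 : cInf (flip g) i v1 ≤ cInf (flip g) i s1 := anti hmf h0r hi hs1.le hsf hvf
    have h2 : g x s1 ≤ i - 1 := le_of_lt_cInf hmf h0r hi hsf (by linarith)
    have h3 : g s0 w1 = i := eq_of_gt hmf h0r hi hwf (by linarith) hsw
    have h4 := hsuper (show x ≤ s0 by linarith) (show s1 ≤ w1 by linarith)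
    rw [hgx', hs, h3] at h4
    omega
  · push_neg at hsw
    have hww : w0 ≤ v0 := by linarith
    have h5 : cInf g i v0 ≤ cInf g i w0 := anti hm h0c hi hww hw hv
    have hc_lt : cInf g i w0 < v1 := by
      calc cInf g i w0 ≤ cInf g i v0 := h1le
        _ ≤ s1 := hq1s
        _ < v1 := hs1
    have h6 : g w0 v1 = i := eq_of_gt hm h0c hi hw hc_lt hv1w1.le
    have h7 : cInf (flip g) i v1 ≤ w0 :=
      csInf_le (bddBelow_colSet hmf h0r hi v1) h6
    have h8 : g x v1 ≤ i - 1 := le_of_lt_cInf hmf h0r hi hvf hxq0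
    have h9 := hsuper (show x ≤ w0 by linarith) hv1w1.le
    rw [hgx', h6, hw] at h9
    omega

/-- The chain-counting lemma. -/
lemma chain_bound (K : ℤ) (hK : ∀ x y, g x y ≤ K)
    (m : ℕ) (hm1 : 1 ≤ m) (w : Fin m → ℝ × ℝ)
    (hwit : ∀ j, g (w j).1 (w j).2 = i)
    (hanti : ∀ ⦃j j' : Fin m⦄, j < j' → cInf g i (w j').1 < cInf g i (w j).1) :
    (m : ℤ) + i ≤ K + 1 := by
  have hne : (Finset.univ : Finset (Fin m)).Nonempty := by
    refine ⟨⟨0, hm1⟩, Finset.mem_univ _⟩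
  set Yf : Fin m → ℝ := fun j => (w j).2 with hYf
  set Y : ℝ := Finset.univ.sup' hne Yf with hY
  have hYle : ∀ j : Fin m, (w j).2 ≤ Y := by
    intro j; rw [hY]; exact Finset.le_sup' Yf (Finset.mem_univ j)
  have claim : ∀ n : ℕ, ∀ hn : n < m, i + n ≤ g (w ⟨n, hn⟩).1 Y := by
    intro n
    induction n with
    | zero =>
      intro hn
      have h1 : g (w ⟨0, hn⟩).1 (w ⟨0, hn⟩).2 ≤ g (w ⟨0, hn⟩).1 Y := hm le_rfl (hYle _)
      rw [hwit _] at h1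
      simpa using h1
    | succ n ih =>
      intro hn
      have hn' : n < m := Nat.lt_of_succ_lt hn
      have IH := ih hn'
      set j : Fin m := ⟨n, hn'⟩
      set j' : Fin m := ⟨n + 1, hn⟩
      have hjj' : j < j' := by simp [j, j', Fin.lt_def]
      have h1 : cInf g i (w j').1 < cInf g i (w j).1 := hanti hjj'
      have hcol : (w j).1 ≤ (w j').1 := by
        by_contra h
        push_neg at h
        exact absurd (anti hm h0c hi h.le (hwit j') (hwit j)) (not_le.2 h1)
      obtain ⟨c, hc_eq, hc_ge, hc_le, hc_leb⟩ := attain hm h0c hi (hwit j')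
        (δ := (cInf g i (w j).1 - cInf g i (w j').1) / 2) (by linarith)
      have hclt : c < cInf g i (w j).1 := by linarith
      have h3 : g (w j).1 c ≤ i - 1 := le_of_lt_cInf hm h0c hi (hwit j) hclt
      have h4 : c ≤ Y := hc_leb.trans (hYle j')
      have h5 := hsuper hcol h4
      rw [hc_eq] at h5
      push_cast
      omega
  have hlast := claim (m - 1) (by omega)
  have hKY := hK (w ⟨m - 1, by omega⟩).1 Y
  have : ((m : ℤ) - 1) = ((m - 1 : ℕ) : ℤ) := by omega
  omega

end Main

/-- The set of characteristic points, in pair form. -/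
def CP (g : ℝ → ℝ → ℤ) (i : ℤ) : Set (ℝ × ℝ) :=
  {p | ∃ a b : ℝ, g a b = i ∧ p = (cInf (flip g) i b, cInf g i a)}

section CPsec

variable (hm : ∀ ⦃x x' : ℝ⦄, x ≤ x' → ∀ ⦃y y' : ℝ⦄, y ≤ y' → g x y ≤ g x' y')
  (h0c : ∀ x : ℝ, ∃ r, g x r = 0) (h0r : ∀ y : ℝ, ∃ r, g r y = 0)
  (hsuper : ∀ ⦃x x' : ℝ⦄, x ≤ x' → ∀ ⦃y y' : ℝ⦄, y ≤ y' → g x y' + g x' y ≤ g x y + g x' y')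
  (hi : 1 ≤ i)
  (hleft : ∀ x y : ℝ, ∃ x' < x, ∃ y' < y, g x' y' = g x y)

include hm h0c h0r hsuper hi hleft

lemma snd_injOn : Set.InjOn Prod.snd (CP g i) := by
  rintro p hp q hq h2
  obtain ⟨a, b, hab, hp'⟩ := hp
  obtain ⟨a', b', hab', hq'⟩ := hq
  rcases lt_trichotomy p.1 q.1 with h | h | h
  · exfalso
    refine noDom hm h0c h0r hsuper hi hleft hab hab' ?_ ?_
    · rw [hp', hq'] at h; exact h
    · rw [hp', hq'] at h2; exact le_of_eq h2
  · exact Prod.ext h h2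
  · exfalso
    refine noDom hm h0c h0r hsuper hi hleft hab' hab ?_ ?_
    · rw [hp', hq'] at h; exact h
    · rw [hp', hq'] at h2; exact le_of_eq h2.symm

lemma T_card_bound (K : ℤ) (hK : ∀ x y, g x y ≤ K)
    (T : Finset (ℝ × ℝ)) (hT : ↑T ⊆ CP g i) (hne : T.Nonempty) :
    (T.card : ℤ) + i ≤ K + 1 := by
  classical
  have hinj : Set.InjOn Prod.snd ↑T :=
    (snd_injOn hm h0c h0r hsuper hi hleft).mono hT
  have hm1 : 1 ≤ T.card := Finset.card_pos.2 hne
  have hcard : (T.image Prod.snd).card = T.card := Finset.card_image_of_injOn hinj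
  set e := (T.image Prod.snd).orderIsoOfFin hcard with he
  have hpt : ∀ j : Fin T.card, ∃ p, p ∈ T ∧ p.2 = ((e (Fin.rev j)) : ℝ) := by
    intro j
    have h := (e (Fin.rev j)).2
    rw [Finset.mem_image] at h
    obtain ⟨p, hpT, hp2⟩ := h
    exact ⟨p, hpT, hp2⟩
  choose pt hptT hpt2 using hpt
  have hptCP : ∀ j, pt j ∈ CP g i := fun j => hT (hptT j)
  choose a b hab hpteq using hptCP
  have hwit : ∀ j, g (a j, b j).1 (a j, b j).2 = i := hab
  have hcInf : ∀ j, cInf g i (a j) = ((e (Fin.rev j)) : ℝ) := by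
    intro j
    have h1 := hpt2 j
    rw [hpteq j] at h1
    exact h1
  have hanti : ∀ ⦃j j' : Fin T.card⦄, j < j' →
      cInf g i ((fun j => (a j, b j)) j').1 < cInf g i ((fun j => (a j, b j)) j).1 := by
    intro j j' h
    simp only
    rw [hcInf j, hcInf j']
    have hrev : Fin.rev j' < Fin.rev j := Fin.rev_lt_rev.2 h
    exact_mod_cast e.strictMono hrev
  exact chain_bound hm h0c h0r hsuper hi K hK T.card hm1 (fun j => (a j, b j)) hwit hanti

lemma CP_finite_card (K : ℤ) (hK : ∀ x y, g x y ≤ K) :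
    (CP g i).Finite ∧
      ∀ N : ℕ, (K : ℤ) + 1 - i ≤ (N : ℤ) → (CP g i).ncard ≤ N := by
  classical
  have hbound : ∀ T : Finset (ℝ × ℝ), ↑T ⊆ CP g i → (T.card : ℤ) + i ≤ K + 1 ∨ T = ∅ := by
    intro T hT
    rcases T.eq_empty_or_nonempty with h | h
    · exact Or.inr h
    · exact Or.inl (T_card_bound hm h0c h0r hsuper hi hleft K hK T hT h)
  have hfin : (CP g i).Finite := by
    by_contra hinf
    obtain ⟨T, hT, hTcard⟩ :=
      Set.Infinite.exists_subset_card_eq hinf ((K + 1 - i).toNat + 1)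
    rcases hbound T hT with h | h
    · rw [hTcard] at h
      have := Int.self_le_toNat (K + 1 - i)
      push_cast at h
      omega
    · rw [h] at hTcard
      simp at hTcard
  refine ⟨hfin, fun N hN => ?_⟩
  rcases hbound hfin.toFinset (by simp) with h | h
  · rw [← Set.ncard_coe_finset, Set.Finite.coe_toFinset] at h
    omega
  · have : CP g i = ∅ := by
      rw [← Set.Finite.coe_toFinset hfin, h]; simp
    rw [this]
    simp

end CPsec

section LexLemmas

variable {G : Type*} [AddCommGroup G] [Lattice G] [CovariantClass G G (· + ·) (· ≤ ·)]

lemma fst_le_of_le {x y : ℤ ×ₗ G} (h : x ≤ y) : (ofLex x).1 ≤ (ofLex y).1 := by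
  rw [← toLex_ofLex x, ← toLex_ofLex y, Prod.Lex.le_iff] at h
  rcases h with h | h
  · exact h.le
  · exact h.1.le

lemma glb_fst_pos (Ls : Set (ℤ ×ₗ G))
    (hGLB : IsGLB Ls (toLex ((0 : ℤ), (0 : G))))
    (h1 : ∀ y ∈ Ls, 1 ≤ (ofLex y).1) : False := by
  have hle : ∀ gg : G, gg ≤ 0 := by
    intro gg
    have hlb : toLex ((0 : ℤ), gg) ∈ lowerBounds Ls := by
      intro y hy
      rw [← toLex_ofLex y, Prod.Lex.le_iff]
      exact Or.inl (by have := h1 y hy; simp only [ofLex_toLex]; omega)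
    have h2 := hGLB.2 hlb
    rw [Prod.Lex.le_iff] at h2
    rcases h2 with h2 | h2
    · exact absurd h2 (by norm_num)
    · exact h2.2
  have htriv : ∀ gg : G, gg = 0 := by
    intro gg
    have ha := hle gg
    have hb := hle (-gg)
    have : (0 : G) ≤ gg := by
      rw [← neg_nonneg] at ha
      simpa using hb.trans (neg_nonneg.2 (le_refl 0))
    exact le_antisymm ha (neg_nonpos.mp hb)
  have hlb : toLex ((1 : ℤ), (0 : G)) ∈ lowerBounds Ls := by
    intro y hy
    rw [← toLex_ofLex y, Prod.Lex.le_iff]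
    rcases lt_or_eq_of_le (h1 y hy) with h | h
    · exact Or.inl h
    · exact Or.inr ⟨h, le_of_eq (htriv _).symm⟩
  have h2 := hGLB.2 hlb
  rw [Prod.Lex.le_iff] at h2
  rcases h2 with h2 | h2
  · exact absurd h2 (by norm_num)
  · exact absurd h2.1 (by norm_num)

lemma lub_fst_attained (Ls : Set (ℤ ×ₗ G)) (z : ℤ ×ₗ G) (hLUB : IsLUB Ls z)
    (h1 : ∀ y ∈ Ls, (ofLex y).1 ≤ (ofLex z).1 - 1) : False := by
  have key : ∀ gg : G, (ofLex z).2 ≤ gg := by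
    intro gg
    have hub : toLex ((ofLex z).1, gg) ∈ upperBounds Ls := by
      intro y hy
      rw [← toLex_ofLex y, Prod.Lex.le_iff]
      exact Or.inl (by have := h1 y hy; simp only [ofLex_toLex]; omega)
    have h2 := hLUB.2 hub
    rw [← toLex_ofLex z, Prod.Lex.le_iff] at h2
    rcases h2 with h2 | h2
    · simp only [ofLex_toLex] at h2; omega
    · exact h2.2
  have htriv : ∀ gg : G, gg = (ofLex z).2 := by
    intro gg
    have ha := key gg
    have hb := key ((ofLex z).2 + ((ofLex z).2 - gg))
    rw [le_add_iff_nonneg_right, sub_nonneg] at hb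
    exact le_antisymm hb ha
  have hub : toLex ((ofLex z).1 - 1, (ofLex z).2) ∈ upperBounds Ls := by
    intro y hy
    rw [← toLex_ofLex y, Prod.Lex.le_iff]
    rcases lt_or_eq_of_le (h1 y hy) with h | h
    · exact Or.inl h
    · exact Or.inr ⟨h, le_of_eq (htriv _)⟩
  have h2 := hLUB.2 hub
  rw [← toLex_ofLex z, Prod.Lex.le_iff] at h2
  rcases h2 with h2 | h2
  · simp only [ofLex_toLex] at h2; omega
  · have := h2.1
    simp only [ofLex_toLex] at this; omega

end LexLemmas

section Counting

lemma ncard_biUnion_le {α β : Type*} (s : Finset α) (A : α → Set β)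
    (hA : ∀ a ∈ s, (A a).Finite) :
    (⋃ a ∈ s, A a).ncard ≤ ∑ a ∈ s, (A a).ncard := by
  classical
  induction s using Finset.induction with
  | empty => simp
  | @insert a s ha ih =>
    rw [Finset.sum_insert ha]
    have h1 : (⋃ x ∈ insert a s, A x) = A a ∪ ⋃ x ∈ s, A x := by
      simp [Set.biUnion_insert]
    rw [h1]
    calc (A a ∪ ⋃ x ∈ s, A x).ncard ≤ (A a).ncard + (⋃ x ∈ s, A x).ncard :=
          Set.ncard_union_le _ _
      _ ≤ (A a).ncard + ∑ x ∈ s, (A x).ncard := by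
          have := ih (fun x hx => hA x (Finset.mem_insert_of_mem hx))
          omega

lemma gauss_sum (k : ℕ) : (∑ i ∈ Finset.range k, (i + 1)) * 2 = k * (k + 1) := by
  induction k with
  | zero => simp
  | succ n ih =>
    rw [Finset.sum_range_succ, add_mul, ih]
    ring

lemma sum_Icc_bound (k : ℕ) : ∑ i ∈ Finset.Icc 1 k, (k - i + 1) ≤ k * (k + 1) / 2 := by
  have h1 : ∑ i ∈ Finset.Icc 1 k, (k - i + 1) = ∑ i ∈ Finset.range k, (k - (1 + i) + 1) := by
    rw [← Finset.Ico_add_one_right_eq_Icc, Finset.sum_Ico_eq_sum_range]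
    simp
  have h2 : ∑ i ∈ Finset.range k, (k - (1 + i) + 1) = ∑ i ∈ Finset.range k, (k - i) := by
    refine Finset.sum_congr rfl (fun i hi => ?_)
    rw [Finset.mem_range] at hi
    omega
  have h3 : ∑ i ∈ Finset.range k, (k - i) = ∑ i ∈ Finset.range k, (i + 1) := by
    have := Finset.sum_range_reflect (fun j => j + 1) k
    rw [← this]
    refine Finset.sum_congr rfl (fun i hi => ?_)
    rw [Finset.mem_range] at hi
    omega
  have h4 := gauss_sum k
  omega

end Counting

end Stmt19Aux


theorem stmt_19 {G : Type*}
    [AddCommGroup G] [Lattice G] [CovariantClass G G (· + ·) (· ≤ ·)]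
    (hG : DedekindSigmaComplete G) (k : ℕ) (hk : 1 ≤ k)
    (F : (Fin 2 → ℝ) → ℤ ×ₗ G) (hF : IsSpectralResolution (k : ℤ) 2 F) :
    (∀ i : ℕ, 1 ≤ i → i ≤ k → (TSet (k : ℤ) F (i : ℤ)).Nonempty →
      (charPts (k : ℤ) F (i : ℤ)).Finite ∧
      (charPts (k : ℤ) F (i : ℤ)).ncard ≤ k - i + 1) ∧
    (charPoints (k : ℤ) F).Finite ∧ (charPoints (k : ℤ) F).ncard ≤ k * (k + 1) / 2 := by
  classical
  obtain ⟨hFmono, hFlub, hFlc, hFglb, hFbox⟩ := hF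
  -- the first-coordinate function in two real variables
  set g : ℝ → ℝ → ℤ := fun x y => (ofLex (F ![x, y])).1 with hg
  -- basic vector lemmas
  have vec_eta : ∀ s : Fin 2 → ℝ, ![s 0, s 1] = s := by
    intro s; funext i; fin_cases i <;> simp
  have upd0 : ∀ (s : Fin 2 → ℝ) (r : ℝ), Function.update s 0 r = ![r, s 1] := by
    intro s r; funext i; fin_cases i <;> simp [Function.update]
  have upd1 : ∀ (s : Fin 2 → ℝ) (r : ℝ), Function.update s 1 r = ![s 0, r] := by
    intro s r; funext i; fin_cases i <;> simp [Function.update]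
  have vec_le : ∀ {x y x' y' : ℝ}, x ≤ x' → y ≤ y' → (![x, y] : Fin 2 → ℝ) ≤ ![x', y'] := by
    intro x y x' y' hx hy i; fin_cases i <;> simpa
  -- bounds for F
  have hFlow : ∀ s, toLex ((0 : ℤ), (0 : G)) ≤ F s := by
    intro s
    exact (hFglb 0 s).1 ⟨s 0, by rw [Function.update_eq_self]⟩
  have hFup : ∀ s, F s ≤ toLex ((k : ℤ), (0 : G)) := fun s => hFlub.1 ⟨s, rfl⟩
  have hf0 : ∀ s : Fin 2 → ℝ, 0 ≤ (ofLex (F s)).1 := fun s => Stmt19Aux.fst_le_of_le (hFlow s)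
  have hfk : ∀ s : Fin 2 → ℝ, (ofLex (F s)).1 ≤ (k : ℤ) := fun s => Stmt19Aux.fst_le_of_le (hFup s)
  -- monotonicity
  have hm : ∀ ⦃x x' : ℝ⦄, x ≤ x' → ∀ ⦃y y' : ℝ⦄, y ≤ y' → g x y ≤ g x' y' := by
    intro x x' hx y y' hy
    exact Stmt19Aux.fst_le_of_le (hFmono (vec_le hx hy))
  -- bound
  have hK : ∀ x y : ℝ, g x y ≤ (k : ℤ) := fun x y => hfk _
  -- zeros along lines
  have hzero : ∀ (j : Fin 2) (s : Fin 2 → ℝ), ∃ r : ℝ, (ofLex (F (Function.update s j r))).1 = 0 := by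
    intro j s
    by_contra hcon
    push_neg at hcon
    refine Stmt19Aux.glb_fst_pos _ (hFglb j s) ?_
    rintro y ⟨r, rfl⟩
    have ha := hf0 (Function.update s j r)
    have hb := hcon r
    omega
  have h0c : ∀ x : ℝ, ∃ r, g x r = 0 := by
    intro x
    obtain ⟨r, hr⟩ := hzero 1 ![x, 0]
    refine ⟨r, ?_⟩
    rw [upd1] at hr
    simpa [hg] using hr
  have h0r : ∀ y : ℝ, ∃ r, g r y = 0 := by
    intro y
    obtain ⟨r, hr⟩ := hzero 0 ![0, y]
    refine ⟨r, ?_⟩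
    rw [upd0] at hr
    simpa [hg] using hr
  -- supermodularity
  have hsuper : ∀ ⦃x x' : ℝ⦄, x ≤ x' → ∀ ⦃y y' : ℝ⦄, y ≤ y' →
      g x y' + g x' y ≤ g x y + g x' y' := by
    intro x x' hx y y' hy
    have hab : (![x, y] : Fin 2 → ℝ) ≤ ![x', y'] := vec_le hx hy
    have h0 := (hFbox _ _ hab).1
    have heq : boxSum F ![x, y] ![x', y'] =
        F ![x', y'] + F ![x, y] - F ![x', y] - F ![x, y'] := by
      unfold boxSum
      rw [show (Finset.univ : Finset (Finset (Fin 2))) = {∅, {0}, {1}, Finset.univ} from by decide]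
      rw [Finset.sum_insert (by decide), Finset.sum_insert (by decide),
        Finset.sum_insert (by decide), Finset.sum_singleton]
      have e1 : (fun i => if i ∈ (∅ : Finset (Fin 2)) then (![x', y'] : Fin 2 → ℝ) i else ![x, y] i) = ![x, y] := by
        funext i; simp
      have e2 : (fun i => if i ∈ ({0} : Finset (Fin 2)) then (![x', y'] : Fin 2 → ℝ) i else ![x, y] i) = ![x', y] := by
        funext i; fin_cases i <;> simp
      have e3 : (fun i => if i ∈ ({1} : Finset (Fin 2)) then (![x', y'] : Fin 2 → ℝ) i else ![x, y] i) = ![x, y'] := by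
        funext i; fin_cases i <;> simp
      have e4 : (fun i => if i ∈ (Finset.univ : Finset (Fin 2)) then (![x', y'] : Fin 2 → ℝ) i else ![x, y] i) = ![x', y'] := by
        funext i; simp
      rw [e1, e2, e3, e4]
      simp only [Finset.card_empty, Finset.card_singleton, Finset.card_univ, Fintype.card_fin]
      norm_num
      abel
    rw [heq] at h0
    have h1 : (0 : ℤ) ≤ (ofLex (F ![x', y'] + F ![x, y] - F ![x', y] - F ![x, y'])).1 :=
      Stmt19Aux.fst_le_of_le h0
    have h2 : (ofLex (F ![x', y'] + F ![x, y] - F ![x', y] - F ![x, y'])).1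
        = g x' y' + g x y - g x' y - g x y' := rfl
    rw [h2] at h1
    omega
  -- left attainment
  have hleft : ∀ x y : ℝ, ∃ x' < x, ∃ y' < y, g x' y' = g x y := by
    intro x y
    by_contra hcon
    push_neg at hcon
    refine Stmt19Aux.lub_fst_attained _ _ (hFlc ![x, y]) ?_
    rintro z ⟨s, hs, rfl⟩
    have h1 : F s ≤ F ![x, y] := hFmono (fun i => (hs i).le)
    have h2 := Stmt19Aux.fst_le_of_le h1
    have h3 : (ofLex (F s)).1 ≠ (ofLex (F ![x, y])).1 := by
      have hs0 : s 0 < x := by simpa using hs 0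
      have hs1 : s 1 < y := by simpa using hs 1
      have h4 := hcon (s 0) hs0 (s 1) hs1
      simp only [hg] at h4
      rw [vec_eta s] at h4
      exact h4
    omega
  -- translation of TSet
  have hTmem : ∀ (h : ℤ) (s : Fin 2 → ℝ), s ∈ TSet (k : ℤ) F h ↔ (ofLex (F s)).1 = h := by
    intro h s
    constructor
    · rintro ⟨_, hh⟩; exact hh
    · intro hh; exact ⟨⟨hFlow s, hFup s⟩, hh⟩
  -- translation of proj
  have hproj0 : ∀ (h : ℤ) (s : Fin 2 → ℝ),
      proj (k : ℤ) F h s 0 = Stmt19Aux.cInf (flip g) h (s 1) := by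
    intro h s
    unfold proj Stmt19Aux.cInf
    congr 1
    ext r
    rw [Set.mem_setOf_eq, Set.mem_setOf_eq, hTmem, upd0]
    rfl
  have hproj1 : ∀ (h : ℤ) (s : Fin 2 → ℝ),
      proj (k : ℤ) F h s 1 = Stmt19Aux.cInf g h (s 0) := by
    intro h s
    unfold proj Stmt19Aux.cInf
    congr 1
    ext r
    rw [Set.mem_setOf_eq, Set.mem_setOf_eq, hTmem, upd1]
  have hcharPt : ∀ (h : ℤ) (s : Fin 2 → ℝ),
      charPt (k : ℤ) F h s = ![Stmt19Aux.cInf (flip g) h (s 1), Stmt19Aux.cInf g h (s 0)] := by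
    intro h s
    funext j
    fin_cases j
    · simpa [charPt] using hproj0 h s
    · simpa [charPt] using hproj1 h s
  -- the embedding from pairs
  have hΦinj : Function.Injective (fun p : ℝ × ℝ => (![p.1, p.2] : Fin 2 → ℝ)) := by
    rintro ⟨a, b⟩ ⟨c, d⟩ h
    have h0 := congrFun h 0
    have h1 := congrFun h 1
    simp only [Matrix.cons_val_zero, Matrix.cons_val_one, Matrix.head_cons] at h0 h1
    exact Prod.ext h0 h1
  have hcharPts : ∀ h : ℤ, charPts (k : ℤ) F h =
      (fun p : ℝ × ℝ => (![p.1, p.2] : Fin 2 → ℝ)) '' Stmt19Aux.CP g h := by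
    intro h
    ext p
    constructor
    · rintro ⟨s, hsT, rfl⟩
      refine ⟨(Stmt19Aux.cInf (flip g) h (s 1), Stmt19Aux.cInf g h (s 0)),
        ⟨s 0, s 1, ?_, rfl⟩, ?_⟩
      · have h1 := (hTmem h s).1 hsT
        simp only [hg]
        rw [vec_eta s]
        exact h1
      · rw [hcharPt]
    · rintro ⟨⟨p1, p2⟩, ⟨a, b, hab, hpe⟩, rfl⟩
      refine ⟨![a, b], ?_, ?_⟩
      · rw [hTmem]
        exact hab
      · rw [hcharPt]
        simp only [Prod.mk.injEq] at hpe
        simp [hpe.1, hpe.2]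
  -- the per-level result
  have main : ∀ h : ℤ, 1 ≤ h → (charPts (k : ℤ) F h).Finite ∧
      ∀ N : ℕ, (k : ℤ) + 1 - h ≤ (N : ℤ) → (charPts (k : ℤ) F h).ncard ≤ N := by
    intro h h1
    obtain ⟨hfin, hcard⟩ :=
      Stmt19Aux.CP_finite_card hm h0c h0r hsuper h1 hleft (k : ℤ) hK
    rw [hcharPts h]
    refine ⟨hfin.image _, fun N hN => ?_⟩
    rw [Set.ncard_image_of_injective _ hΦinj]
    exact hcard N hN
  constructor
  · -- part 1
    intro i hi1 hik _
    have h1 : (1 : ℤ) ≤ (i : ℤ) := by exact_mod_cast hi1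
    obtain ⟨hfin, hcard⟩ := main (i : ℤ) h1
    refine ⟨hfin, hcard (k - i + 1) ?_⟩
    have : ((k - i + 1 : ℕ) : ℤ) = (k : ℤ) - (i : ℤ) + 1 := by omega
    omega
  · -- part 2
    have hsub : charPoints (k : ℤ) F ⊆ ⋃ i ∈ Finset.Icc 1 k, charPts (k : ℤ) F (i : ℤ) := by
      rintro p ⟨h, hh0, hhk, hmem⟩
      have heq : h = ((h.toNat : ℕ) : ℤ) := (Int.toNat_of_nonneg hh0.le).symm
      refine Set.mem_biUnion (show h.toNat ∈ Finset.Icc 1 k by rw [Finset.mem_Icc]; omega) ?_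
      rwa [← heq]
    have hfinU : (⋃ i ∈ Finset.Icc 1 k, charPts (k : ℤ) F (i : ℤ)).Finite := by
      refine Set.Finite.biUnion (Finset.Icc 1 k).finite_toSet (fun i hi => ?_)
      rw [Finset.mem_coe, Finset.mem_Icc] at hi
      exact (main (i : ℤ) (by exact_mod_cast hi.1)).1
    have hfin : (charPoints (k : ℤ) F).Finite := hfinU.subset hsub
    refine ⟨hfin, ?_⟩
    calc (charPoints (k : ℤ) F).ncard
        ≤ (⋃ i ∈ Finset.Icc 1 k, charPts (k : ℤ) F (i : ℤ)).ncard :=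
          Set.ncard_le_ncard hsub hfinU
      _ ≤ ∑ i ∈ Finset.Icc 1 k, (charPts (k : ℤ) F (i : ℤ)).ncard := by
          refine Stmt19Aux.ncard_biUnion_le _ _ (fun i hi => ?_)
          rw [Finset.mem_Icc] at hi
          exact (main (i : ℤ) (by exact_mod_cast hi.1)).1
      _ ≤ ∑ i ∈ Finset.Icc 1 k, (k - i + 1) := by
          refine Finset.sum_le_sum (fun i hi => ?_)
          rw [Finset.mem_Icc] at hi
          obtain ⟨hfin', hcard⟩ := main (i : ℤ) (by exact_mod_cast hi.1)
          refine hcard (k - i + 1) ?_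
          have h2 := hi.2
          have : ((k - i + 1 : ℕ) : ℤ) = (k : ℤ) - (i : ℤ) + 1 := by omega
          omega
      _ ≤ k * (k + 1) / 2 := Stmt19Aux.sum_Icc_bound k
end
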